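/- arXiv:2404.04534 — 5 statements merged into one kernel-verified Lean document; each statement's English description precedes it below -/
import Mathlib

section
/- (Contraction under fast mixing.) Let α = min_{y,y',d} q(y|y',d). Then for any λ ≥ 0, any nondecreasing nonnegative convex g with g(0)=0, and any optimal (myopic) policy π_t at time t, the induced next-step distributions satisfy ∑_y |p_{t+1}(y|A) − p_{t+1}(y|B)| ≤ 2·(1 − α·|𝒴|)·∑_y |p_t(y|A) − p_t(y|B)|. In particular, if α > 1/(2|𝒴|), then lim_{t→∞} ∑_y |p_t(y|A) − p_t(y|B)| = 0 and lim_{t→∞} Δ_t = 0. -/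
/-!
Dynamic setting: `Y` is a finite set of nonzero real qualifications; groups `A`/`B`
are encoded as `true`/`false` with weights `wA`/`wB`; `q y y' d` is the probability
of moving to qualification `y` from `y'` under decision `d`; `pA t`/`pB t` are the
group qualification distributions at time `t`, and at every step the institution
uses a myopic maximizer of the penalized objective.
-/

open Finset Filter Topology
open scoped Classical

noncomputable section

/-- A policy assigns selection probabilities in `[0,1]`. -/
def Admissible (Y : Finset ℝ) (π : Bool → ℝ → ℝ) : Prop :=
  ∀ c, ∀ y ∈ Y, 0 ≤ π c y ∧ π c y ≤ 1

/-- `g` is nondecreasing, nonnegative, convex on `[0,∞)` with `g 0 = 0`. -/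
def AdmissiblePenalty (g : ℝ → ℝ) : Prop :=
  g 0 = 0 ∧ MonotoneOn g (Set.Ici 0) ∧ ConvexOn ℝ (Set.Ici 0) g ∧
    ∀ x ∈ Set.Ici (0 : ℝ), 0 ≤ g x

/-- `r` is a probability distribution on `Y`. -/
def IsDist (Y : Finset ℝ) (r : ℝ → ℝ) : Prop :=
  (∀ y ∈ Y, 0 ≤ r y) ∧ ∑ y ∈ Y, r y = 1

/-- `q` is a Markov kernel on `Y` (for each decision `d`). -/
def IsKernel (Y : Finset ℝ) (q : ℝ → ℝ → Bool → ℝ) : Prop :=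
  (∀ y ∈ Y, ∀ y' ∈ Y, ∀ d, 0 ≤ q y y' d) ∧
    ∀ y' ∈ Y, ∀ d, (∑ y ∈ Y, q y y' d) = 1

/-- One-step update of a group distribution `r` under selection probabilities `sel`:
`p'(y) = ∑_{y'} r(y')·(sel(y')·q(y|y',1) + (1 − sel(y'))·q(y|y',0))`. -/
def stepDist (Y : Finset ℝ) (q : ℝ → ℝ → Bool → ℝ) (r sel : ℝ → ℝ) (y : ℝ) : ℝ :=
  ∑ y' ∈ Y, r y' * (sel y' * q y y' true + (1 - sel y') * q y y' false)

/-- Instantaneous utility `∑_{c,y} p(c)·p_t(y|c)·y·π(1|c,y)`. -/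
def dUtil (Y : Finset ℝ) (wA wB : ℝ) (pA pB : ℝ → ℝ) (π : Bool → ℝ → ℝ) : ℝ :=
  wA * ∑ y ∈ Y, pA y * y * π true y + wB * ∑ y ∈ Y, pB y * y * π false y

/-- Instantaneous disparity. -/
def dDisp (Y : Finset ℝ) (pA pB : ℝ → ℝ) (π : Bool → ℝ → ℝ) : ℝ :=
  |(∑ y ∈ Y, pA y * π true y) - ∑ y ∈ Y, pB y * π false y|

/-- Instantaneous penalized objective. -/
def dObj (Y : Finset ℝ) (wA wB : ℝ) (pA pB : ℝ → ℝ) (g : ℝ → ℝ) (lam : ℝ)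
    (π : Bool → ℝ → ℝ) : ℝ :=
  dUtil Y wA wB pA pB π - lam * g (dDisp Y pA pB π)

/-- `π` is a myopic optimal policy for the state `(pA, pB)`. -/
def dOptimal (Y : Finset ℝ) (wA wB : ℝ) (pA pB : ℝ → ℝ) (g : ℝ → ℝ) (lam : ℝ)
    (π : Bool → ℝ → ℝ) : Prop :=
  Admissible Y π ∧
    ∀ π', Admissible Y π' → dObj Y wA wB pA pB g lam π' ≤ dObj Y wA wB pA pB g lam π

/-- A trajectory of the myopic dynamics: at every time `t` the institution uses a
myopic optimal policy `πt t`, and the group distributions evolve accordingly. -/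
def Trajectory (Y : Finset ℝ) (q : ℝ → ℝ → Bool → ℝ) (wA wB : ℝ) (g : ℝ → ℝ)
    (lam : ℝ) (pA pB : ℕ → ℝ → ℝ) (πt : ℕ → Bool → ℝ → ℝ) : Prop :=
  ∀ t, dOptimal Y wA wB (pA t) (pB t) g lam (πt t) ∧
    (∀ y ∈ Y, pA (t + 1) y = stepDist Y q (pA t) (πt t true) y) ∧
    (∀ y ∈ Y, pB (t + 1) y = stepDist Y q (pB t) (πt t false) y)

/-- The utility-maximizing threshold selection rule. -/
def thr : ℝ → ℝ := fun y => if 0 < y then 1 else 0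
lemma sum_mul_indic (Y : Finset ℝ) (f : ℝ → ℝ) {y0 : ℝ} (h : y0 ∈ Y) (ε : ℝ) :
    ∑ y ∈ Y, f y * (if y = y0 then ε else 0) = f y0 * ε := by
  have h1 : ∀ y ∈ Y, f y * (if y = y0 then ε else 0) = if y = y0 then f y * ε else 0 := by
    intro y _; split <;> simp
  rw [Finset.sum_congr rfl h1, Finset.sum_ite_eq' Y y0 (fun y => f y * ε), if_pos h]

lemma no_improve
    (Y : Finset ℝ) (wA wB : ℝ) (a b : ℝ → ℝ) (g : ℝ → ℝ)
    (hg : AdmissiblePenalty g) (lam : ℝ) (hlam : 0 ≤ lam)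
    (π : Bool → ℝ → ℝ) (hopt : dOptimal Y wA wB a b g lam π)
    (eA eB : ℝ → ℝ)
    (hadm : Admissible Y (fun c y => π c y + if c then eA y else eB y))
    (hgain : 0 < wA * ∑ y ∈ Y, a y * y * eA y + wB * ∑ y ∈ Y, b y * y * eB y)
    (hdisp : |(((∑ y ∈ Y, a y * π true y) - ∑ y ∈ Y, b y * π false y) +
        ((∑ y ∈ Y, a y * eA y) - ∑ y ∈ Y, b y * eB y))| ≤
        |(∑ y ∈ Y, a y * π true y) - ∑ y ∈ Y, b y * π false y| ) : False := by
  set π' : Bool → ℝ → ℝ := fun c y => π c y + if c then eA y else eB y with hπ'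
  have hle := hopt.2 π' hadm
  have hπt : ∀ y, π' true y = π true y + eA y := fun y => by simp [hπ']
  have hπf : ∀ y, π' false y = π false y + eB y := fun y => by simp [hπ']
  have e1 : ∑ y ∈ Y, a y * y * π' true y
      = ∑ y ∈ Y, a y * y * π true y + ∑ y ∈ Y, a y * y * eA y := by
    rw [← Finset.sum_add_distrib]
    exact Finset.sum_congr rfl fun y _ => by rw [hπt y]; ring
  have e2 : ∑ y ∈ Y, b y * y * π' false y
      = ∑ y ∈ Y, b y * y * π false y + ∑ y ∈ Y, b y * y * eB y := by
    rw [← Finset.sum_add_distrib]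
    exact Finset.sum_congr rfl fun y _ => by rw [hπf y]; ring
  have e3 : ∑ y ∈ Y, a y * π' true y
      = ∑ y ∈ Y, a y * π true y + ∑ y ∈ Y, a y * eA y := by
    rw [← Finset.sum_add_distrib]
    exact Finset.sum_congr rfl fun y _ => by rw [hπt y]; ring
  have e4 : ∑ y ∈ Y, b y * π' false y
      = ∑ y ∈ Y, b y * π false y + ∑ y ∈ Y, b y * eB y := by
    rw [← Finset.sum_add_distrib]
    exact Finset.sum_congr rfl fun y _ => by rw [hπf y]; ring
  have hu : dUtil Y wA wB a b π' = dUtil Y wA wB a b π +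
      (wA * ∑ y ∈ Y, a y * y * eA y + wB * ∑ y ∈ Y, b y * y * eB y) := by
    unfold dUtil; rw [e1, e2]; ring
  have hdd : dDisp Y a b π' ≤ dDisp Y a b π := by
    unfold dDisp; rw [e3, e4]
    calc |(∑ y ∈ Y, a y * π true y + ∑ y ∈ Y, a y * eA y) -
        (∑ y ∈ Y, b y * π false y + ∑ y ∈ Y, b y * eB y)|
        = |(((∑ y ∈ Y, a y * π true y) - ∑ y ∈ Y, b y * π false y) +
        ((∑ y ∈ Y, a y * eA y) - ∑ y ∈ Y, b y * eB y))| := by congr 1; ring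
      _ ≤ _ := hdisp
  have hgmono : g (dDisp Y a b π') ≤ g (dDisp Y a b π) := by
    refine hg.2.1 ?_ ?_ hdd
    · exact Set.mem_Ici.mpr (by unfold dDisp; positivity)
    · exact Set.mem_Ici.mpr (by unfold dDisp; positivity)
  have hpen : lam * g (dDisp Y a b π') ≤ lam * g (dDisp Y a b π) :=
    mul_le_mul_of_nonneg_left hgmono hlam
  unfold dObj at hle
  linarith
lemma pert_B_up (Y : Finset ℝ) (wA wB : ℝ) (hwB : 0 < wB) (a b : ℝ → ℝ)
    (g : ℝ → ℝ) (hg : AdmissiblePenalty g) (lam : ℝ) (hlam : 0 ≤ lam)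
    (π : Bool → ℝ → ℝ) (hopt : dOptimal Y wA wB a b g lam π)
    {y0 : ℝ} (hy0 : y0 ∈ Y) (hy0pos : 0 < y0) (hb0 : 0 < b y0) (hπ0 : π false y0 < 1)
    (hd : 0 < (∑ y ∈ Y, a y * π true y) - ∑ y ∈ Y, b y * π false y) : False := by
  set d := (∑ y ∈ Y, a y * π true y) - ∑ y ∈ Y, b y * π false y with hdd
  set ε := min (1 - π false y0) (d / b y0) with hε
  have hε1 : ε ≤ 1 - π false y0 := min_le_left _ _
  have hε2 : ε ≤ d / b y0 := min_le_right _ _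
  have hεpos : 0 < ε := lt_min (by linarith) (div_pos hd hb0)
  have hεle : b y0 * ε ≤ d := by
    rw [le_div_iff₀ hb0] at hε2; linarith [hε2]
  refine no_improve Y wA wB a b g hg lam hlam π hopt (fun _ => (0:ℝ))
      (fun y => if y = y0 then ε else 0) ?_ ?_ ?_
  · intro c y hy
    obtain ⟨h1, h2⟩ := hopt.1 c y hy
    cases c
    · by_cases hyy : y = y0
      · subst hyy
        simp only [Bool.false_eq_true, if_false, if_pos rfl, ite_true, if_true]
        constructor <;> linarith
      · simp only [Bool.false_eq_true, if_false, if_neg hyy]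
        constructor <;> linarith
    · simp only [if_true]
      constructor <;> linarith
  · rw [sum_mul_indic Y (fun y => b y * y) hy0 ε]
    simp only [mul_zero, Finset.sum_const_zero]
    have : 0 < b y0 * y0 * ε := by positivity
    nlinarith
  · rw [sum_mul_indic Y b hy0 ε]
    simp only [mul_zero, Finset.sum_const_zero]
    rw [← hdd, abs_of_pos hd, abs_of_nonneg (by nlinarith : (0:ℝ) ≤ d + (0 - b y0 * ε))]
    nlinarith
lemma pert_A_down (Y : Finset ℝ) (wA wB : ℝ) (hwA : 0 < wA) (a b : ℝ → ℝ)
    (g : ℝ → ℝ) (hg : AdmissiblePenalty g) (lam : ℝ) (hlam : 0 ≤ lam)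
    (π : Bool → ℝ → ℝ) (hopt : dOptimal Y wA wB a b g lam π)
    {y0 : ℝ} (hy0 : y0 ∈ Y) (hy0neg : y0 < 0) (ha0 : 0 < a y0) (hπ0 : 0 < π true y0)
    (hd : 0 < (∑ y ∈ Y, a y * π true y) - ∑ y ∈ Y, b y * π false y) : False := by
  set d := (∑ y ∈ Y, a y * π true y) - ∑ y ∈ Y, b y * π false y with hdd
  set ε := min (π true y0) (d / a y0) with hε
  have hε1 : ε ≤ π true y0 := min_le_left _ _
  have hε2 : ε ≤ d / a y0 := min_le_right _ _
  have hεpos : 0 < ε := lt_min hπ0 (div_pos hd ha0)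
  have hεle : a y0 * ε ≤ d := by rw [le_div_iff₀ ha0] at hε2; linarith [hε2]
  refine no_improve Y wA wB a b g hg lam hlam π hopt
      (fun y => if y = y0 then -ε else 0) (fun _ => (0:ℝ)) ?_ ?_ ?_
  · intro c y hy
    obtain ⟨h1, h2⟩ := hopt.1 c y hy
    cases c
    · simp only [Bool.false_eq_true, if_false]
      constructor <;> linarith
    · by_cases hyy : y = y0
      · subst hyy
        simp only [if_true, if_pos rfl, ite_true]
        constructor <;> linarith
      · simp only [if_true, if_neg hyy]
        constructor <;> linarith
  · rw [sum_mul_indic Y (fun y => a y * y) hy0 (-ε)]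
    simp only [mul_zero, Finset.sum_const_zero]
    have : 0 < a y0 * (-y0) * ε := mul_pos (mul_pos ha0 (by linarith)) hεpos
    nlinarith
  · rw [sum_mul_indic Y a hy0 (-ε)]
    simp only [mul_zero, Finset.sum_const_zero]
    rw [← hdd, abs_of_pos hd,
      abs_of_nonneg (by nlinarith : (0:ℝ) ≤ d + (a y0 * -ε - 0))]
    nlinarith

lemma pert_A_up (Y : Finset ℝ) (wA wB : ℝ) (hwA : 0 < wA) (a b : ℝ → ℝ)
    (g : ℝ → ℝ) (hg : AdmissiblePenalty g) (lam : ℝ) (hlam : 0 ≤ lam)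
    (π : Bool → ℝ → ℝ) (hopt : dOptimal Y wA wB a b g lam π)
    {y0 : ℝ} (hy0 : y0 ∈ Y) (hy0pos : 0 < y0) (ha0 : 0 < a y0) (hπ0 : π true y0 < 1)
    (hd : (∑ y ∈ Y, a y * π true y) - ∑ y ∈ Y, b y * π false y < 0) : False := by
  set d := (∑ y ∈ Y, a y * π true y) - ∑ y ∈ Y, b y * π false y with hdd
  set ε := min (1 - π true y0) (-d / a y0) with hε
  have hε1 : ε ≤ 1 - π true y0 := min_le_left _ _
  have hε2 : ε ≤ -d / a y0 := min_le_right _ _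
  have hεpos : 0 < ε := lt_min (by linarith) (div_pos (by linarith) ha0)
  have hεle : a y0 * ε ≤ -d := by rw [le_div_iff₀ ha0] at hε2; linarith [hε2]
  refine no_improve Y wA wB a b g hg lam hlam π hopt
      (fun y => if y = y0 then ε else 0) (fun _ => (0:ℝ)) ?_ ?_ ?_
  · intro c y hy
    obtain ⟨h1, h2⟩ := hopt.1 c y hy
    cases c
    · simp only [Bool.false_eq_true, if_false]
      constructor <;> linarith
    · by_cases hyy : y = y0
      · subst hyy
        simp only [if_true, if_pos rfl, ite_true]
        constructor <;> linarith
      · simp only [if_true, if_neg hyy]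
        constructor <;> linarith
  · rw [sum_mul_indic Y (fun y => a y * y) hy0 ε]
    simp only [mul_zero, Finset.sum_const_zero]
    have : 0 < a y0 * y0 * ε := by positivity
    nlinarith
  · rw [sum_mul_indic Y a hy0 ε]
    simp only [mul_zero, Finset.sum_const_zero]
    rw [← hdd, abs_of_neg hd,
      abs_of_nonpos (by nlinarith : d + (a y0 * ε - 0) ≤ 0)]
    nlinarith

lemma pert_B_down (Y : Finset ℝ) (wA wB : ℝ) (hwB : 0 < wB) (a b : ℝ → ℝ)
    (g : ℝ → ℝ) (hg : AdmissiblePenalty g) (lam : ℝ) (hlam : 0 ≤ lam)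
    (π : Bool → ℝ → ℝ) (hopt : dOptimal Y wA wB a b g lam π)
    {y0 : ℝ} (hy0 : y0 ∈ Y) (hy0neg : y0 < 0) (hb0 : 0 < b y0) (hπ0 : 0 < π false y0)
    (hd : (∑ y ∈ Y, a y * π true y) - ∑ y ∈ Y, b y * π false y < 0) : False := by
  set d := (∑ y ∈ Y, a y * π true y) - ∑ y ∈ Y, b y * π false y with hdd
  set ε := min (π false y0) (-d / b y0) with hε
  have hε1 : ε ≤ π false y0 := min_le_left _ _
  have hε2 : ε ≤ -d / b y0 := min_le_right _ _
  have hεpos : 0 < ε := lt_min hπ0 (div_pos (by linarith) hb0)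
  have hεle : b y0 * ε ≤ -d := by rw [le_div_iff₀ hb0] at hε2; linarith [hε2]
  refine no_improve Y wA wB a b g hg lam hlam π hopt (fun _ => (0:ℝ))
      (fun y => if y = y0 then -ε else 0) ?_ ?_ ?_
  · intro c y hy
    obtain ⟨h1, h2⟩ := hopt.1 c y hy
    cases c
    · by_cases hyy : y = y0
      · subst hyy
        simp only [Bool.false_eq_true, if_false, if_pos rfl, ite_true, if_true]
        constructor <;> linarith
      · simp only [Bool.false_eq_true, if_false, if_neg hyy]
        constructor <;> linarith
    · simp only [if_true]
      constructor <;> linarith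
  · rw [sum_mul_indic Y (fun y => b y * y) hy0 (-ε)]
    simp only [mul_zero, Finset.sum_const_zero]
    have : 0 < b y0 * (-y0) * ε := mul_pos (mul_pos hb0 (by linarith)) hεpos
    nlinarith
  · rw [sum_mul_indic Y b hy0 (-ε)]
    simp only [mul_zero, Finset.sum_const_zero]
    rw [← hdd, abs_of_neg hd,
      abs_of_nonpos (by nlinarith : d + (0 - b y0 * -ε) ≤ 0)]
    nlinarith
lemma pert_AB_up (Y : Finset ℝ) (wA wB : ℝ) (hwA : 0 < wA) (hwB : 0 < wB)
    (a b : ℝ → ℝ) (g : ℝ → ℝ) (hg : AdmissiblePenalty g) (lam : ℝ) (hlam : 0 ≤ lam)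
    (π : Bool → ℝ → ℝ) (hopt : dOptimal Y wA wB a b g lam π)
    {y1 y2 : ℝ} (hy1 : y1 ∈ Y) (hy1pos : 0 < y1) (ha1 : 0 < a y1) (hπ1 : π true y1 < 1)
    (hy2 : y2 ∈ Y) (hy2pos : 0 < y2) (hb2 : 0 < b y2) (hπ2 : π false y2 < 1) : False := by
  set t := min (a y1 * (1 - π true y1)) (b y2 * (1 - π false y2)) with ht
  have ht1 : t ≤ a y1 * (1 - π true y1) := min_le_left _ _
  have ht2 : t ≤ b y2 * (1 - π false y2) := min_le_right _ _
  have htpos : 0 < t := lt_min (by nlinarith) (by nlinarith)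
  have hdiv1 : t / a y1 ≤ 1 - π true y1 := by
    rw [div_le_iff₀ ha1]; nlinarith
  have hdiv2 : t / b y2 ≤ 1 - π false y2 := by
    rw [div_le_iff₀ hb2]; nlinarith
  have hdp1 : 0 < t / a y1 := div_pos htpos ha1
  have hdp2 : 0 < t / b y2 := div_pos htpos hb2
  refine no_improve Y wA wB a b g hg lam hlam π hopt
      (fun y => if y = y1 then t / a y1 else 0)
      (fun y => if y = y2 then t / b y2 else 0) ?_ ?_ ?_
  · intro c y hy
    obtain ⟨h1, h2⟩ := hopt.1 c y hy
    cases c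
    · by_cases hyy : y = y2
      · subst hyy
        simp only [Bool.false_eq_true, if_false, if_pos rfl, ite_true, if_true]
        constructor <;> linarith
      · simp only [Bool.false_eq_true, if_false, if_neg hyy]
        constructor <;> linarith
    · by_cases hyy : y = y1
      · subst hyy
        simp only [if_true, if_pos rfl, ite_true]
        constructor <;> linarith
      · simp only [if_true, if_neg hyy, ite_true]
        constructor <;> linarith
  · rw [sum_mul_indic Y (fun y => a y * y) hy1 (t / a y1),
      sum_mul_indic Y (fun y => b y * y) hy2 (t / b y2)]
    rw [show a y1 * y1 * (t / a y1) = y1 * t by field_simp,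
      show b y2 * y2 * (t / b y2) = y2 * t by field_simp]
    nlinarith [mul_pos hwA (mul_pos hy1pos htpos), mul_pos hwB (mul_pos hy2pos htpos)]
  · rw [sum_mul_indic Y a hy1 (t / a y1), sum_mul_indic Y b hy2 (t / b y2)]
    rw [show a y1 * (t / a y1) = t by field_simp, show b y2 * (t / b y2) = t by field_simp]
    simp

lemma pert_AB_down (Y : Finset ℝ) (wA wB : ℝ) (hwA : 0 < wA) (hwB : 0 < wB)
    (a b : ℝ → ℝ) (g : ℝ → ℝ) (hg : AdmissiblePenalty g) (lam : ℝ) (hlam : 0 ≤ lam)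
    (π : Bool → ℝ → ℝ) (hopt : dOptimal Y wA wB a b g lam π)
    {y1 y2 : ℝ} (hy1 : y1 ∈ Y) (hy1neg : y1 < 0) (ha1 : 0 < a y1) (hπ1 : 0 < π true y1)
    (hy2 : y2 ∈ Y) (hy2neg : y2 < 0) (hb2 : 0 < b y2) (hπ2 : 0 < π false y2) : False := by
  set t := min (a y1 * π true y1) (b y2 * π false y2) with ht
  have ht1 : t ≤ a y1 * π true y1 := min_le_left _ _
  have ht2 : t ≤ b y2 * π false y2 := min_le_right _ _
  have htpos : 0 < t := lt_min (by nlinarith) (by nlinarith)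
  have hdiv1 : t / a y1 ≤ π true y1 := by rw [div_le_iff₀ ha1]; nlinarith
  have hdiv2 : t / b y2 ≤ π false y2 := by rw [div_le_iff₀ hb2]; nlinarith
  have hdp1 : 0 < t / a y1 := div_pos htpos ha1
  have hdp2 : 0 < t / b y2 := div_pos htpos hb2
  refine no_improve Y wA wB a b g hg lam hlam π hopt
      (fun y => if y = y1 then -(t / a y1) else 0)
      (fun y => if y = y2 then -(t / b y2) else 0) ?_ ?_ ?_
  · intro c y hy
    obtain ⟨h1, h2⟩ := hopt.1 c y hy
    cases c
    · by_cases hyy : y = y2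
      · subst hyy
        simp only [Bool.false_eq_true, if_false, if_pos rfl, ite_true, if_true]
        constructor <;> linarith
      · simp only [Bool.false_eq_true, if_false, if_neg hyy]
        constructor <;> linarith
    · by_cases hyy : y = y1
      · subst hyy
        simp only [if_true, if_pos rfl, ite_true]
        constructor <;> linarith
      · simp only [if_true, if_neg hyy, ite_true]
        constructor <;> linarith
  · rw [sum_mul_indic Y (fun y => a y * y) hy1 (-(t / a y1)),
      sum_mul_indic Y (fun y => b y * y) hy2 (-(t / b y2))]
    rw [show a y1 * y1 * -(t / a y1) = -y1 * t by field_simp,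
      show b y2 * y2 * -(t / b y2) = -y2 * t by field_simp]
    nlinarith [mul_pos hwA (mul_pos (by linarith : (0:ℝ) < -y1) htpos),
      mul_pos hwB (mul_pos (by linarith : (0:ℝ) < -y2) htpos)]
  · rw [sum_mul_indic Y a hy1 (-(t / a y1)), sum_mul_indic Y b hy2 (-(t / b y2))]
    rw [show a y1 * -(t / a y1) = -t by field_simp, show b y2 * -(t / b y2) = -t by field_simp]
    simp

lemma pert_A_up_down (Y : Finset ℝ) (wA wB : ℝ) (hwA : 0 < wA) (hwB : 0 < wB)
    (a b : ℝ → ℝ) (g : ℝ → ℝ) (hg : AdmissiblePenalty g) (lam : ℝ) (hlam : 0 ≤ lam)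
    (π : Bool → ℝ → ℝ) (hopt : dOptimal Y wA wB a b g lam π)
    {y1 y2 : ℝ} (hy1 : y1 ∈ Y) (hy1pos : 0 < y1) (ha1 : 0 < a y1) (hπ1 : π true y1 < 1)
    (hy2 : y2 ∈ Y) (hy2neg : y2 < 0) (ha2 : 0 < a y2) (hπ2 : 0 < π true y2) : False := by
  have hne : y1 ≠ y2 := by intro h; rw [h] at hy1pos; linarith
  set t := min (a y1 * (1 - π true y1)) (a y2 * π true y2) with ht
  have ht1 : t ≤ a y1 * (1 - π true y1) := min_le_left _ _
  have ht2 : t ≤ a y2 * π true y2 := min_le_right _ _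
  have htpos : 0 < t := lt_min (by nlinarith) (by nlinarith)
  have hdiv1 : t / a y1 ≤ 1 - π true y1 := by rw [div_le_iff₀ ha1]; nlinarith
  have hdiv2 : t / a y2 ≤ π true y2 := by rw [div_le_iff₀ ha2]; nlinarith
  have hdp1 : 0 < t / a y1 := div_pos htpos ha1
  have hdp2 : 0 < t / a y2 := div_pos htpos ha2
  refine no_improve Y wA wB a b g hg lam hlam π hopt
      (fun y => (if y = y1 then t / a y1 else 0) + (if y = y2 then -(t / a y2) else 0))
      (fun _ => (0:ℝ)) ?_ ?_ ?_
  · intro c y hy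
    obtain ⟨h1, h2⟩ := hopt.1 c y hy
    cases c
    · simp only [Bool.false_eq_true, if_false]
      constructor <;> linarith
    · by_cases hyy : y = y1
      · subst hyy
        simp only [if_true, if_pos rfl, if_neg hne, ite_true]
        constructor <;> linarith
      · by_cases hyy2 : y = y2
        · subst hyy2
          simp only [if_true, if_pos rfl, if_neg hyy, ite_true]
          constructor <;> linarith
        · simp only [if_true, if_neg hyy, if_neg hyy2, ite_true]
          constructor <;> linarith
  · have hsplit : ∑ y ∈ Y, a y * y *
        ((if y = y1 then t / a y1 else 0) + (if y = y2 then -(t / a y2) else 0))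
        = ∑ y ∈ Y, a y * y * (if y = y1 then t / a y1 else 0)
          + ∑ y ∈ Y, a y * y * (if y = y2 then -(t / a y2) else 0) := by
      rw [← Finset.sum_add_distrib]
      exact Finset.sum_congr rfl fun y _ => by ring
    rw [hsplit, sum_mul_indic Y (fun y => a y * y) hy1 (t / a y1),
      sum_mul_indic Y (fun y => a y * y) hy2 (-(t / a y2))]
    rw [show a y1 * y1 * (t / a y1) = y1 * t by field_simp,
      show a y2 * y2 * -(t / a y2) = -y2 * t by field_simp]
    simp only [mul_zero, Finset.sum_const_zero]
    nlinarith [mul_pos hwA (mul_pos hy1pos htpos),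
      mul_pos hwA (mul_pos (by linarith : (0:ℝ) < -y2) htpos)]
  · have hsplit : ∑ y ∈ Y, a y *
        ((if y = y1 then t / a y1 else 0) + (if y = y2 then -(t / a y2) else 0))
        = ∑ y ∈ Y, a y * (if y = y1 then t / a y1 else 0)
          + ∑ y ∈ Y, a y * (if y = y2 then -(t / a y2) else 0) := by
      rw [← Finset.sum_add_distrib]
      exact Finset.sum_congr rfl fun y _ => by ring
    rw [hsplit, sum_mul_indic Y a hy1 (t / a y1), sum_mul_indic Y a hy2 (-(t / a y2))]
    rw [show a y1 * (t / a y1) = t by field_simp, show a y2 * -(t / a y2) = -t by field_simp]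
    simp

lemma pert_B_up_down (Y : Finset ℝ) (wA wB : ℝ) (hwA : 0 < wA) (hwB : 0 < wB)
    (a b : ℝ → ℝ) (g : ℝ → ℝ) (hg : AdmissiblePenalty g) (lam : ℝ) (hlam : 0 ≤ lam)
    (π : Bool → ℝ → ℝ) (hopt : dOptimal Y wA wB a b g lam π)
    {y1 y2 : ℝ} (hy1 : y1 ∈ Y) (hy1pos : 0 < y1) (hb1 : 0 < b y1) (hπ1 : π false y1 < 1)
    (hy2 : y2 ∈ Y) (hy2neg : y2 < 0) (hb2 : 0 < b y2) (hπ2 : 0 < π false y2) : False := by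
  have hne : y1 ≠ y2 := by intro h; rw [h] at hy1pos; linarith
  set t := min (b y1 * (1 - π false y1)) (b y2 * π false y2) with ht
  have ht1 : t ≤ b y1 * (1 - π false y1) := min_le_left _ _
  have ht2 : t ≤ b y2 * π false y2 := min_le_right _ _
  have htpos : 0 < t := lt_min (by nlinarith) (by nlinarith)
  have hdiv1 : t / b y1 ≤ 1 - π false y1 := by rw [div_le_iff₀ hb1]; nlinarith
  have hdiv2 : t / b y2 ≤ π false y2 := by rw [div_le_iff₀ hb2]; nlinarith
  have hdp1 : 0 < t / b y1 := div_pos htpos hb1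
  have hdp2 : 0 < t / b y2 := div_pos htpos hb2
  refine no_improve Y wA wB a b g hg lam hlam π hopt (fun _ => (0:ℝ))
      (fun y => (if y = y1 then t / b y1 else 0) + (if y = y2 then -(t / b y2) else 0))
      ?_ ?_ ?_
  · intro c y hy
    obtain ⟨h1, h2⟩ := hopt.1 c y hy
    cases c
    · by_cases hyy : y = y1
      · subst hyy
        simp only [Bool.false_eq_true, if_false, if_pos rfl, if_neg hne, ite_true, if_true]
        constructor <;> linarith
      · by_cases hyy2 : y = y2
        · subst hyy2
          simp only [Bool.false_eq_true, if_false, if_pos rfl, if_neg hyy, ite_true, if_true]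
          constructor <;> linarith
        · simp only [Bool.false_eq_true, if_false, if_neg hyy, if_neg hyy2]
          constructor <;> linarith
    · simp only [if_true]
      constructor <;> linarith
  · have hsplit : ∑ y ∈ Y, b y * y *
        ((if y = y1 then t / b y1 else 0) + (if y = y2 then -(t / b y2) else 0))
        = ∑ y ∈ Y, b y * y * (if y = y1 then t / b y1 else 0)
          + ∑ y ∈ Y, b y * y * (if y = y2 then -(t / b y2) else 0) := by
      rw [← Finset.sum_add_distrib]
      exact Finset.sum_congr rfl fun y _ => by ring
    rw [hsplit, sum_mul_indic Y (fun y => b y * y) hy1 (t / b y1),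
      sum_mul_indic Y (fun y => b y * y) hy2 (-(t / b y2))]
    rw [show b y1 * y1 * (t / b y1) = y1 * t by field_simp,
      show b y2 * y2 * -(t / b y2) = -y2 * t by field_simp]
    simp only [mul_zero, Finset.sum_const_zero]
    nlinarith [mul_pos hwB (mul_pos hy1pos htpos),
      mul_pos hwB (mul_pos (by linarith : (0:ℝ) < -y2) htpos)]
  · have hsplit : ∑ y ∈ Y, b y *
        ((if y = y1 then t / b y1 else 0) + (if y = y2 then -(t / b y2) else 0))
        = ∑ y ∈ Y, b y * (if y = y1 then t / b y1 else 0)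
          + ∑ y ∈ Y, b y * (if y = y2 then -(t / b y2) else 0) := by
      rw [← Finset.sum_add_distrib]
      exact Finset.sum_congr rfl fun y _ => by ring
    rw [hsplit, sum_mul_indic Y b hy1 (t / b y1), sum_mul_indic Y b hy2 (-(t / b y2))]
    rw [show b y1 * (t / b y1) = t by field_simp, show b y2 * -(t / b y2) = -t by field_simp]
    simp
lemma opt_structure (Y : Finset ℝ) (wA wB : ℝ) (hwA : 0 < wA) (hwB : 0 < wB)
    (a b : ℝ → ℝ) (g : ℝ → ℝ) (hg : AdmissiblePenalty g) (lam : ℝ) (hlam : 0 ≤ lam)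
    (π : Bool → ℝ → ℝ) (hopt : dOptimal Y wA wB a b g lam π) :
    (0 ≤ (∑ y ∈ Y, a y * π true y) - ∑ y ∈ Y, b y * π false y ∧
      (∀ y ∈ Y, 0 < y → 0 < b y → π false y = 1) ∧
      (∀ y ∈ Y, y < 0 → 0 < a y → π true y = 0)) ∨
    ((∑ y ∈ Y, a y * π true y) - ∑ y ∈ Y, b y * π false y ≤ 0 ∧
      (∀ y ∈ Y, 0 < y → 0 < a y → π true y = 1) ∧
      (∀ y ∈ Y, y < 0 → 0 < b y → π false y = 0)) := by
  set d := (∑ y ∈ Y, a y * π true y) - ∑ y ∈ Y, b y * π false y with hdd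
  rcases lt_trichotomy d 0 with hd | hd | hd
  · right
    refine ⟨le_of_lt hd, ?_, ?_⟩
    · intro y hy hpos hay
      by_contra hne
      exact pert_A_up Y wA wB hwA a b g hg lam hlam π hopt hy hpos hay
        (lt_of_le_of_ne (hopt.1 true y hy).2 hne) hd
    · intro y hy hneg hby
      by_contra hne
      exact pert_B_down Y wA wB hwB a b g hg lam hlam π hopt hy hneg hby
        (lt_of_le_of_ne' (hopt.1 false y hy).1 hne) hd
  · by_cases hex : (∃ y, y ∈ Y ∧ 0 < y ∧ 0 < b y ∧ π false y < 1) ∨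
        (∃ y, y ∈ Y ∧ y < 0 ∧ 0 < a y ∧ 0 < π true y)
    · right
      refine ⟨le_of_eq hd, ?_, ?_⟩
      · intro y hy hpos hay
        by_contra hne
        have hπlt : π true y < 1 := lt_of_le_of_ne (hopt.1 true y hy).2 hne
        rcases hex with ⟨y2, hy2, h2p, h2b, h2π⟩ | ⟨y2, hy2, h2n, h2a, h2π⟩
        · exact pert_AB_up Y wA wB hwA hwB a b g hg lam hlam π hopt hy hpos hay hπlt
            hy2 h2p h2b h2π
        · exact pert_A_up_down Y wA wB hwA hwB a b g hg lam hlam π hopt hy hpos hay hπlt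
            hy2 h2n h2a h2π
      · intro y hy hneg hby
        by_contra hne
        have hπgt : 0 < π false y := lt_of_le_of_ne' (hopt.1 false y hy).1 hne
        rcases hex with ⟨y2, hy2, h2p, h2b, h2π⟩ | ⟨y2, hy2, h2n, h2a, h2π⟩
        · exact pert_B_up_down Y wA wB hwA hwB a b g hg lam hlam π hopt hy2 h2p h2b h2π
            hy hneg hby hπgt
        · exact pert_AB_down Y wA wB hwA hwB a b g hg lam hlam π hopt hy2 h2n h2a h2π
            hy hneg hby hπgt
    · left
      push_neg at hex
      obtain ⟨hex1, hex2⟩ := hex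
      refine ⟨ge_of_eq hd, ?_, ?_⟩
      · intro y hy hpos hby
        exact le_antisymm (hopt.1 false y hy).2 (hex1 y hy hpos hby)
      · intro y hy hneg hay
        exact le_antisymm (hex2 y hy hneg hay) (hopt.1 true y hy).1
  · left
    refine ⟨le_of_lt hd, ?_, ?_⟩
    · intro y hy hpos hby
      by_contra hne
      exact pert_B_up Y wA wB hwB a b g hg lam hlam π hopt hy hpos hby
        (lt_of_le_of_ne (hopt.1 false y hy).2 hne) hd
    · intro y hy hneg hay
      by_contra hne
      exact pert_A_down Y wA wB hwA a b g hg lam hlam π hopt hy hneg hay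
        (lt_of_le_of_ne' (hopt.1 true y hy).1 hne) hd
lemma comp_bound (Y : Finset ℝ) (hY : ∀ y ∈ Y, y ≠ 0)
    (a b πA πB : ℝ → ℝ)
    (ha : ∀ y ∈ Y, 0 ≤ a y) (hb : ∀ y ∈ Y, 0 ≤ b y)
    (hπA : ∀ y ∈ Y, 0 ≤ πA y ∧ πA y ≤ 1) (hπB : ∀ y ∈ Y, 0 ≤ πB y ∧ πB y ≤ 1)
    (hs1 : ∀ y ∈ Y, 0 < y → 0 < b y → πB y = 1)
    (hs2 : ∀ y ∈ Y, y < 0 → 0 < a y → πA y = 0)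
    (hd : ∑ y ∈ Y, b y * πB y ≤ ∑ y ∈ Y, a y * πA y) :
    ∑ y ∈ Y, min (a y) (b y) * |πA y - πB y| ≤ ∑ y ∈ Y, max (a y - b y) 0 := by
  classical
  set P := Y.filter (fun y => 0 < y) with hP
  set N := Y.filter (fun y => ¬ 0 < y) with hN
  have hPsub : P ⊆ Y := Finset.filter_subset _ _
  have hNsub : N ⊆ Y := Finset.filter_subset _ _
  have hPmem : ∀ y ∈ P, y ∈ Y ∧ 0 < y := fun y hy => Finset.mem_filter.mp hy
  have hNmem : ∀ y ∈ N, y ∈ Y ∧ y < 0 := by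
    intro y hy
    obtain ⟨h1, h2⟩ := Finset.mem_filter.mp hy
    exact ⟨h1, lt_of_le_of_ne (not_lt.mp h2) (hY y h1)⟩
  have hsplit : ∀ f : ℝ → ℝ, ∑ y ∈ Y, f y = ∑ y ∈ P, f y + ∑ y ∈ N, f y := by
    intro f
    rw [hP, hN, Finset.sum_filter_add_sum_filter_not]
  -- pointwise (a) on P
  have hptA : ∀ y ∈ P, min (a y) (b y) * |πA y - πB y| ≤ min (a y) (b y) * (1 - πA y) := by
    intro y hy
    obtain ⟨hyY, hypos⟩ := hPmem y hy
    have hm0 : 0 ≤ min (a y) (b y) := le_min (ha y hyY) (hb y hyY)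
    rcases eq_or_lt_of_le hm0 with hm | hm
    · rw [← hm]; simp
    · have hbpos : 0 < b y := lt_of_lt_of_le hm (min_le_right _ _)
      rw [hs1 y hyY hypos hbpos, abs_of_nonpos (by linarith [(hπA y hyY).2])]
      apply le_of_eq; ring_nf
  -- pointwise (b) on N
  have hptB : ∀ y ∈ N, min (a y) (b y) * |πA y - πB y| ≤ b y * πB y := by
    intro y hy
    obtain ⟨hyY, hyneg⟩ := hNmem y hy
    have hm0 : 0 ≤ min (a y) (b y) := le_min (ha y hyY) (hb y hyY)
    rcases eq_or_lt_of_le hm0 with hm | hm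
    · rw [← hm]; simp only [zero_mul]
      exact mul_nonneg (hb y hyY) (hπB y hyY).1
    · have hapos : 0 < a y := lt_of_lt_of_le hm (min_le_left _ _)
      rw [hs2 y hyY hyneg hapos, abs_of_nonpos (by linarith [(hπB y hyY).1] : 0 - πB y ≤ 0)]
      have : min (a y) (b y) ≤ b y := min_le_right _ _
      have hπB0 := (hπB y hyY).1
      nlinarith
  -- (c)
  have hbP : ∑ y ∈ P, b y * πB y = ∑ y ∈ P, b y := by
    apply Finset.sum_congr rfl
    intro y hy
    obtain ⟨hyY, hypos⟩ := hPmem y hy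
    rcases eq_or_lt_of_le (hb y hyY) with h | h
    · rw [← h]; ring
    · rw [hs1 y hyY hypos h]; ring
  have haN : ∑ y ∈ N, a y * πA y = 0 := by
    apply Finset.sum_eq_zero
    intro y hy
    obtain ⟨hyY, hyneg⟩ := hNmem y hy
    rcases eq_or_lt_of_le (ha y hyY) with h | h
    · rw [← h]; ring
    · rw [hs2 y hyY hyneg h]; ring
  have hc : ∑ y ∈ N, b y * πB y ≤ ∑ y ∈ P, a y * πA y - ∑ y ∈ P, b y := by
    have h1 := hsplit (fun y => b y * πB y)
    have h2 := hsplit (fun y => a y * πA y)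
    rw [h1, h2, haN, hbP] at hd
    linarith
  -- pointwise (d) on P
  have hptD : ∀ y ∈ P, min (a y) (b y) * (1 - πA y) + (a y * πA y - b y)
      ≤ max (a y - b y) 0 := by
    intro y hy
    obtain ⟨hyY, _⟩ := hPmem y hy
    have h1 : min (a y) (b y) ≤ a y := min_le_left _ _
    have h2 : min (a y) (b y) ≤ b y := min_le_right _ _
    have h3 := (hπA y hyY).1
    have h4 := (hπA y hyY).2
    have h5 : a y - b y ≤ max (a y - b y) 0 := le_max_left _ _
    nlinarith
  -- assemble
  have hM := hsplit (fun y => min (a y) (b y) * |πA y - πB y|)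
  rw [hM]
  have s1 : ∑ y ∈ P, min (a y) (b y) * |πA y - πB y| ≤
      ∑ y ∈ P, min (a y) (b y) * (1 - πA y) := Finset.sum_le_sum hptA
  have s2 : ∑ y ∈ N, min (a y) (b y) * |πA y - πB y| ≤ ∑ y ∈ N, b y * πB y :=
    Finset.sum_le_sum hptB
  have s3 : ∑ y ∈ P, (min (a y) (b y) * (1 - πA y) + (a y * πA y - b y)) ≤
      ∑ y ∈ P, max (a y - b y) 0 := Finset.sum_le_sum hptD
  have s4 : ∑ y ∈ P, (min (a y) (b y) * (1 - πA y) + (a y * πA y - b y))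
      = ∑ y ∈ P, min (a y) (b y) * (1 - πA y) + (∑ y ∈ P, a y * πA y - ∑ y ∈ P, b y) := by
    rw [Finset.sum_add_distrib, Finset.sum_sub_distrib]
  have s5 : ∑ y ∈ P, max (a y - b y) 0 ≤ ∑ y ∈ Y, max (a y - b y) 0 := by
    apply Finset.sum_le_sum_of_subset_of_nonneg hPsub
    intro y _ _
    exact le_max_right _ _
  linarith
lemma max_add_max_neg (x : ℝ) : max x 0 + max (-x) 0 = |x| := by
  rcases le_total 0 x with h | h
  · rw [max_eq_left h, max_eq_right (by linarith : -x ≤ 0), abs_of_nonneg h]; ring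
  · rw [max_eq_right h, max_eq_left (by linarith : 0 ≤ -x), abs_of_nonpos h]; ring

lemma max_sub_max_neg (x : ℝ) : max x 0 - max (-x) 0 = x := by
  rcases le_total 0 x with h | h
  · rw [max_eq_left h, max_eq_right (by linarith : -x ≤ 0)]; ring
  · rw [max_eq_right h, max_eq_left (by linarith : 0 ≤ -x)]; ring

lemma M_le (Y : Finset ℝ) (hY : ∀ y ∈ Y, y ≠ 0) (wA wB : ℝ)
    (hwA : 0 < wA) (hwB : 0 < wB)
    (a b : ℝ → ℝ) (g : ℝ → ℝ) (hg : AdmissiblePenalty g) (lam : ℝ) (hlam : 0 ≤ lam)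
    (π : Bool → ℝ → ℝ) (hopt : dOptimal Y wA wB a b g lam π)
    (ha : IsDist Y a) (hb : IsDist Y b) :
    2 * ∑ y ∈ Y, min (a y) (b y) * |π true y - π false y| ≤ ∑ y ∈ Y, |a y - b y| := by
  have hsum : ∑ y ∈ Y, max (a y - b y) 0 + ∑ y ∈ Y, max (b y - a y) 0
      = ∑ y ∈ Y, |a y - b y| := by
    rw [← Finset.sum_add_distrib]
    apply Finset.sum_congr rfl
    intro y _
    rw [show b y - a y = -(a y - b y) by ring]
    exact max_add_max_neg _
  have hsum2 : ∑ y ∈ Y, max (a y - b y) 0 = ∑ y ∈ Y, max (b y - a y) 0 := by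
    have h1 : ∑ y ∈ Y, (max (a y - b y) 0 - max (b y - a y) 0) = ∑ y ∈ Y, (a y - b y) := by
      apply Finset.sum_congr rfl
      intro y _
      rw [show b y - a y = -(a y - b y) by ring]
      exact max_sub_max_neg _
    rw [Finset.sum_sub_distrib, Finset.sum_sub_distrib, ha.2, hb.2] at h1
    linarith
  rcases opt_structure Y wA wB hwA hwB a b g hg lam hlam π hopt with
    ⟨hd, h1, h2⟩ | ⟨hd, h1, h2⟩
  · have := comp_bound Y hY a b (π true) (π false) ha.1 hb.1
      (fun y hy => hopt.1 true y hy) (fun y hy => hopt.1 false y hy) h1 h2 (by linarith)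
    linarith
  · have hcb := comp_bound Y hY b a (π false) (π true) hb.1 ha.1
      (fun y hy => hopt.1 false y hy) (fun y hy => hopt.1 true y hy) h1 h2 (by linarith)
    have heq : ∑ y ∈ Y, min (a y) (b y) * |π true y - π false y|
        = ∑ y ∈ Y, min (b y) (a y) * |π false y - π true y| := by
      apply Finset.sum_congr rfl
      intro y _
      rw [min_comm, abs_sub_comm]
    rw [heq]
    linarith
lemma contraction (Y : Finset ℝ) (q : ℝ → ℝ → Bool → ℝ) (hq : IsKernel Y q)
    (α : ℝ) (hql : ∀ y ∈ Y, ∀ y' ∈ Y, ∀ d, α ≤ q y y' d)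
    (a b : ℝ → ℝ) (ha : IsDist Y a) (hb : IsDist Y b)
    (πA πB : ℝ → ℝ) (hπA : ∀ y ∈ Y, 0 ≤ πA y ∧ πA y ≤ 1)
    (hπB : ∀ y ∈ Y, 0 ≤ πB y ∧ πB y ≤ 1)
    (hM : 2 * ∑ y ∈ Y, min (a y) (b y) * |πA y - πB y| ≤ ∑ y ∈ Y, |a y - b y|) :
    ∑ y ∈ Y, |stepDist Y q a πA y - stepDist Y q b πB y| ≤
      2 * (1 - α * Y.card) * ∑ y ∈ Y, |a y - b y| := by
  classical
  rcases Finset.eq_empty_or_nonempty Y with rfl | hne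
  · simp
  have hαn : α * Y.card ≤ 1 := by
    obtain ⟨y0, hy0⟩ := hne
    have hsum := hq.2 y0 hy0 true
    have hle : ∑ _y ∈ Y, α ≤ ∑ y ∈ Y, q y y0 true :=
      Finset.sum_le_sum (fun y hy => hql y hy y0 hy0 true)
    rw [Finset.sum_const, nsmul_eq_mul, hsum] at hle
    rw [mul_comm]
    exact hle
  set n : ℝ := (Y.card : ℝ) with hn
  set m : ℝ → ℝ := fun y => min (a y) (b y) with hm
  set u : ℝ → ℝ := fun y => a y - m y with hu
  set v : ℝ → ℝ := fun y => b y - m y with hv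
  set KA : ℝ → ℝ → ℝ := fun y y' => πA y' * q y y' true + (1 - πA y') * q y y' false with hKA
  set KB : ℝ → ℝ → ℝ := fun y y' => πB y' * q y y' true + (1 - πB y') * q y y' false with hKB
  have hu0 : ∀ y ∈ Y, 0 ≤ u y := by
    intro y hy; simp only [hu, hm]; have := min_le_left (a y) (b y); linarith
  have hv0 : ∀ y ∈ Y, 0 ≤ v y := by
    intro y hy; simp only [hv, hm]; have := min_le_right (a y) (b y); linarith
  have huv : ∀ y, u y + v y = |a y - b y| := by
    intro y
    simp only [hu, hv, hm]
    rcases le_total (a y) (b y) with h | h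
    · rw [min_eq_left h, abs_of_nonpos (by linarith : a y - b y ≤ 0)]; ring
    · rw [min_eq_right h, abs_of_nonneg (by linarith : 0 ≤ a y - b y)]; ring
  have hσ : ∑ y ∈ Y, u y = ∑ y ∈ Y, v y := by
    have h1 : ∑ y ∈ Y, (u y - v y) = ∑ y ∈ Y, (a y - b y) := by
      apply Finset.sum_congr rfl
      intro y _; simp only [hu, hv]; ring
    have e1 : ∑ y ∈ Y, (u y - v y) = ∑ y ∈ Y, u y - ∑ y ∈ Y, v y := Finset.sum_sub_distrib _ _
    have e2 : ∑ y ∈ Y, (a y - b y) = ∑ y ∈ Y, a y - ∑ y ∈ Y, b y := Finset.sum_sub_distrib _ _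
    have e3 := ha.2
    have e4 := hb.2
    linarith
  have hStot : ∑ y ∈ Y, u y + ∑ y ∈ Y, v y = ∑ y ∈ Y, |a y - b y| := by
    rw [← Finset.sum_add_distrib]
    exact Finset.sum_congr rfl fun y _ => huv y
  -- kernel facts
  have hKAge : ∀ y ∈ Y, ∀ y' ∈ Y, α ≤ KA y y' := by
    intro y hy y' hy'
    have h1 := hql y hy y' hy' true
    have h0 := hql y hy y' hy' false
    have hp := hπA y' hy'
    simp only [hKA]
    nlinarith [mul_nonneg hp.1 (by linarith : 0 ≤ q y y' true - α),
      mul_nonneg (by linarith : 0 ≤ 1 - πA y') (by linarith : 0 ≤ q y y' false - α)]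
  have hKBge : ∀ y ∈ Y, ∀ y' ∈ Y, α ≤ KB y y' := by
    intro y hy y' hy'
    have h1 := hql y hy y' hy' true
    have h0 := hql y hy y' hy' false
    have hp := hπB y' hy'
    simp only [hKB]
    nlinarith [mul_nonneg hp.1 (by linarith : 0 ≤ q y y' true - α),
      mul_nonneg (by linarith : 0 ≤ 1 - πB y') (by linarith : 0 ≤ q y y' false - α)]
  have hrowq : ∀ y' ∈ Y, ∀ dd : Bool, ∑ y ∈ Y, (q y y' dd - α) = 1 - α * n := by
    intro y' hy' dd
    rw [Finset.sum_sub_distrib, hq.2 y' hy' dd, Finset.sum_const, nsmul_eq_mul, hn]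
    ring
  have hrowKA : ∀ y' ∈ Y, ∑ y ∈ Y, (KA y y' - α) = 1 - α * n := by
    intro y' hy'
    have : ∑ y ∈ Y, (KA y y' - α)
        = πA y' * ∑ y ∈ Y, (q y y' true - α) + (1 - πA y') * ∑ y ∈ Y, (q y y' false - α) := by
      rw [Finset.mul_sum, Finset.mul_sum, ← Finset.sum_add_distrib]
      apply Finset.sum_congr rfl
      intro y _; simp only [hKA]; ring
    rw [this, hrowq y' hy' true, hrowq y' hy' false]
    ring
  have hrowKB : ∀ y' ∈ Y, ∑ y ∈ Y, (KB y y' - α) = 1 - α * n := by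
    intro y' hy'
    have : ∑ y ∈ Y, (KB y y' - α)
        = πB y' * ∑ y ∈ Y, (q y y' true - α) + (1 - πB y') * ∑ y ∈ Y, (q y y' false - α) := by
      rw [Finset.mul_sum, Finset.mul_sum, ← Finset.sum_add_distrib]
      apply Finset.sum_congr rfl
      intro y _; simp only [hKB]; ring
    rw [this, hrowq y' hy' true, hrowq y' hy' false]
    ring
  have h1αn : 0 ≤ 1 - α * n := by
    rw [hn]; linarith
  -- the decomposition
  have hstep : ∀ y ∈ Y, stepDist Y q a πA y - stepDist Y q b πB y =
      (∑ y' ∈ Y, m y' * (πA y' - πB y') * (q y y' true - q y y' false))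
      + ∑ y' ∈ Y, (u y' * (KA y y' - α) - v y' * (KB y y' - α)) := by
    intro y hy
    have key : stepDist Y q a πA y - stepDist Y q b πB y =
        ∑ y' ∈ Y, (m y' * (πA y' - πB y') * (q y y' true - q y y' false)
          + (u y' * (KA y y' - α) - v y' * (KB y y' - α)) + α * (u y' - v y')) := by
      unfold stepDist
      rw [← Finset.sum_sub_distrib]
      apply Finset.sum_congr rfl
      intro y' _
      simp only [hu, hv, hm, hKA, hKB]
      ring
    rw [key]
    rw [Finset.sum_add_distrib, Finset.sum_add_distrib]
    have : ∑ y' ∈ Y, α * (u y' - v y') = 0 := by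
      rw [← Finset.mul_sum, Finset.sum_sub_distrib, hσ]
      ring
    rw [this]
    ring
  -- bound
  have hbound : ∀ y ∈ Y, |stepDist Y q a πA y - stepDist Y q b πB y| ≤
      (∑ y' ∈ Y, m y' * |πA y' - πB y'| * |q y y' true - q y y' false|)
      + ∑ y' ∈ Y, (u y' * (KA y y' - α) + v y' * (KB y y' - α)) := by
    intro y hy
    rw [hstep y hy]
    refine le_trans (abs_add_le _ _) (add_le_add ?_ ?_)
    · refine le_trans (Finset.abs_sum_le_sum_abs _ _) (Finset.sum_le_sum ?_)
      intro y' hy'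
      rw [abs_mul, abs_mul]
      have hm0 : 0 ≤ m y' := le_min (ha.1 y' hy') (hb.1 y' hy')
      rw [abs_of_nonneg hm0]
    · refine le_trans (Finset.abs_sum_le_sum_abs _ _) (Finset.sum_le_sum ?_)
      intro y' hy'
      have h1 : 0 ≤ u y' * (KA y y' - α) :=
        mul_nonneg (hu0 y' hy') (by linarith [hKAge y hy y' hy'])
      have h2 : 0 ≤ v y' * (KB y y' - α) :=
        mul_nonneg (hv0 y' hy') (by linarith [hKBge y hy y' hy'])
      rw [abs_sub_comm]
      refine le_trans (abs_sub _ _) ?_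
      rw [abs_of_nonneg h1, abs_of_nonneg h2]
      linarith
  have hT1 : ∑ y ∈ Y, ∑ y' ∈ Y, m y' * |πA y' - πB y'| * |q y y' true - q y y' false|
      ≤ 2 * (1 - α * n) * ∑ y' ∈ Y, m y' * |πA y' - πB y'| := by
    rw [Finset.sum_comm]
    have : ∀ y' ∈ Y, ∑ y ∈ Y, m y' * |πA y' - πB y'| * |q y y' true - q y y' false|
        ≤ m y' * |πA y' - πB y'| * (2 * (1 - α * n)) := by
      intro y' hy'
      rw [← Finset.mul_sum]
      refine mul_le_mul_of_nonneg_left ?_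
        (mul_nonneg (le_min (ha.1 y' hy') (hb.1 y' hy')) (abs_nonneg _))
      have hptw : ∀ y ∈ Y, |q y y' true - q y y' false| ≤
          (q y y' true - α) + (q y y' false - α) := by
        intro y hy
        have h1 := hql y hy y' hy' true
        have h0 := hql y hy y' hy' false
        rw [abs_le]
        constructor <;> linarith
      refine le_trans (Finset.sum_le_sum hptw) ?_
      rw [Finset.sum_add_distrib, hrowq y' hy' true, hrowq y' hy' false]
      linarith
    refine le_trans (Finset.sum_le_sum this) ?_
    rw [← Finset.sum_mul]
    linarith [Finset.sum_nonneg (fun y' (hy' : y' ∈ Y) =>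
      mul_nonneg (le_min (ha.1 y' hy') (hb.1 y' hy')) (abs_nonneg (πA y' - πB y')))]
  have hT2 : ∑ y ∈ Y, ∑ y' ∈ Y, (u y' * (KA y y' - α) + v y' * (KB y y' - α))
      = (1 - α * n) * ∑ y ∈ Y, |a y - b y| := by
    rw [Finset.sum_comm]
    have : ∀ y' ∈ Y, ∑ y ∈ Y, (u y' * (KA y y' - α) + v y' * (KB y y' - α))
        = (u y' + v y') * (1 - α * n) := by
      intro y' hy'
      rw [Finset.sum_add_distrib, ← Finset.mul_sum, ← Finset.mul_sum,
        hrowKA y' hy', hrowKB y' hy']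
      ring
    rw [Finset.sum_congr rfl this, ← Finset.sum_mul, ← hStot]
    have : ∑ y ∈ Y, (u y + v y) = ∑ y ∈ Y, u y + ∑ y ∈ Y, v y := Finset.sum_add_distrib
    rw [this]
    ring
  have hMnn : 0 ≤ ∑ y' ∈ Y, m y' * |πA y' - πB y'| :=
    Finset.sum_nonneg (fun y' hy' =>
      mul_nonneg (le_min (ha.1 y' hy') (hb.1 y' hy')) (abs_nonneg _))
  calc ∑ y ∈ Y, |stepDist Y q a πA y - stepDist Y q b πB y|
      ≤ ∑ y ∈ Y, ((∑ y' ∈ Y, m y' * |πA y' - πB y'| * |q y y' true - q y y' false|)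
        + ∑ y' ∈ Y, (u y' * (KA y y' - α) + v y' * (KB y y' - α))) :=
        Finset.sum_le_sum hbound
    _ = ∑ y ∈ Y, ∑ y' ∈ Y, m y' * |πA y' - πB y'| * |q y y' true - q y y' false|
        + ∑ y ∈ Y, ∑ y' ∈ Y, (u y' * (KA y y' - α) + v y' * (KB y y' - α)) :=
        Finset.sum_add_distrib
    _ ≤ 2 * (1 - α * n) * ∑ y' ∈ Y, m y' * |πA y' - πB y'|
        + (1 - α * n) * ∑ y ∈ Y, |a y - b y| := by
        rw [hT2]; linarith
    _ ≤ 2 * (1 - α * n) * ∑ y ∈ Y, |a y - b y| := by nlinarith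
lemma step_isDist (Y : Finset ℝ) (q : ℝ → ℝ → Bool → ℝ) (hq : IsKernel Y q)
    (r sel : ℝ → ℝ) (hr : IsDist Y r) (hsel : ∀ y ∈ Y, 0 ≤ sel y ∧ sel y ≤ 1) :
    IsDist Y (stepDist Y q r sel) := by
  constructor
  · intro y hy
    unfold stepDist
    apply Finset.sum_nonneg
    intro y' hy'
    have h1 := hq.1 y hy y' hy' true
    have h0 := hq.1 y hy y' hy' false
    have hs := hsel y' hy'
    have : 0 ≤ sel y' * q y y' true + (1 - sel y') * q y y' false :=
      add_nonneg (mul_nonneg hs.1 h1) (mul_nonneg (by linarith [hs.2]) h0)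
    exact mul_nonneg (hr.1 y' hy') this
  · unfold stepDist
    rw [Finset.sum_comm]
    have hinner : ∀ y' ∈ Y,
        ∑ y ∈ Y, r y' * (sel y' * q y y' true + (1 - sel y') * q y y' false) = r y' := by
      intro y' hy'
      calc ∑ y ∈ Y, r y' * (sel y' * q y y' true + (1 - sel y') * q y y' false)
          = ∑ y ∈ Y, ((r y' * sel y') * q y y' true
              + (r y' * (1 - sel y')) * q y y' false) :=
            Finset.sum_congr rfl (fun y _ => by ring)
        _ = (r y' * sel y') * ∑ y ∈ Y, q y y' true
              + (r y' * (1 - sel y')) * ∑ y ∈ Y, q y y' false := by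
            rw [Finset.sum_add_distrib, ← Finset.mul_sum, ← Finset.mul_sum]
        _ = r y' := by rw [hq.2 y' hy' true, hq.2 y' hy' false]; ring
    rw [Finset.sum_congr rfl hinner]
    exact hr.2

lemma alpha_le (Y : Finset ℝ) (q : ℝ → ℝ → Bool → ℝ) (hq : IsKernel Y q)
    (α : ℝ) (hα : α = sInf {x : ℝ | ∃ y ∈ Y, ∃ y' ∈ Y, ∃ d : Bool, x = q y y' d}) :
    ∀ y ∈ Y, ∀ y' ∈ Y, ∀ d, α ≤ q y y' d := by
  intro y hy y' hy' d
  rw [hα]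
  apply csInf_le
  · refine ⟨0, ?_⟩
    rintro x ⟨z, hz, z', hz', dd, rfl⟩
    exact hq.1 z hz z' hz' dd
  · exact ⟨y, hy, y', hy', d, rfl⟩

lemma disp_bound (Y : Finset ℝ) (a b πA πB : ℝ → ℝ)
    (ha : ∀ y ∈ Y, 0 ≤ a y) (hb : ∀ y ∈ Y, 0 ≤ b y)
    (hπA : ∀ y ∈ Y, 0 ≤ πA y ∧ πA y ≤ 1) (hπB : ∀ y ∈ Y, 0 ≤ πB y ∧ πB y ≤ 1)
    (hmassa : ∑ y ∈ Y, a y = 1) (hmassb : ∑ y ∈ Y, b y = 1)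
    (hM : 2 * ∑ y ∈ Y, min (a y) (b y) * |πA y - πB y| ≤ ∑ y ∈ Y, |a y - b y|) :
    |(∑ y ∈ Y, a y * πA y) - ∑ y ∈ Y, b y * πB y| ≤ 2 * ∑ y ∈ Y, |a y - b y| := by
  have hdec : (∑ y ∈ Y, a y * πA y) - ∑ y ∈ Y, b y * πB y
      = ∑ y ∈ Y, ((a y - b y) * πA y + b y * (πA y - πB y)) := by
    rw [← Finset.sum_sub_distrib]
    exact Finset.sum_congr rfl (fun y _ => by ring)
  rw [hdec]
  refine le_trans (Finset.abs_sum_le_sum_abs _ _) ?_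
  have hpt : ∀ y ∈ Y, |(a y - b y) * πA y + b y * (πA y - πB y)| ≤
      |a y - b y| + (min (a y) (b y) * |πA y - πB y| + max (b y - a y) 0) := by
    intro y hy
    refine le_trans (abs_add_le _ _) (add_le_add ?_ ?_)
    · rw [abs_mul, abs_of_nonneg (hπA y hy).1]
      nlinarith [abs_nonneg (a y - b y), (hπA y hy).2]
    · rw [abs_mul, abs_of_nonneg (hb y hy)]
      have h1 : b y ≤ min (a y) (b y) + max (b y - a y) 0 := by
        rcases le_total (a y) (b y) with h | h
        · rw [min_eq_left h, max_eq_left (by linarith : (0:ℝ) ≤ b y - a y)]; linarith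
        · rw [min_eq_right h, max_eq_right (by linarith : b y - a y ≤ 0)]; linarith
      have h2 : |πA y - πB y| ≤ 1 := by
        rw [abs_le]
        constructor <;> linarith [(hπA y hy).1, (hπA y hy).2, (hπB y hy).1, (hπB y hy).2]
      have h3 : 0 ≤ max (b y - a y) 0 := le_max_right _ _
      have h4 : (0:ℝ) ≤ min (a y) (b y) := le_min (ha y hy) (hb y hy)
      nlinarith [abs_nonneg (πA y - πB y)]
  refine le_trans (Finset.sum_le_sum hpt) ?_
  rw [Finset.sum_add_distrib, Finset.sum_add_distrib]
  have hplus : ∑ y ∈ Y, max (a y - b y) 0 + ∑ y ∈ Y, max (b y - a y) 0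
      = ∑ y ∈ Y, |a y - b y| := by
    rw [← Finset.sum_add_distrib]
    apply Finset.sum_congr rfl
    intro y _
    rw [show b y - a y = -(a y - b y) by ring]
    exact max_add_max_neg _
  have hminus : ∑ y ∈ Y, max (a y - b y) 0 = ∑ y ∈ Y, max (b y - a y) 0 := by
    have h1 : ∑ y ∈ Y, (max (a y - b y) 0 - max (b y - a y) 0) = ∑ y ∈ Y, (a y - b y) := by
      apply Finset.sum_congr rfl
      intro y _
      rw [show b y - a y = -(a y - b y) by ring]
      exact max_sub_max_neg _
    have e1 : ∑ y ∈ Y, (max (a y - b y) 0 - max (b y - a y) 0)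
        = ∑ y ∈ Y, max (a y - b y) 0 - ∑ y ∈ Y, max (b y - a y) 0 := Finset.sum_sub_distrib _ _
    have e2 : ∑ y ∈ Y, (a y - b y) = ∑ y ∈ Y, a y - ∑ y ∈ Y, b y := Finset.sum_sub_distrib _ _
    linarith
  linarith

/-- Contraction under fast mixing. With `α = min_{y,y',d} q(y|y',d)`,
along any trajectory of the myopic dynamics the total-variation gap contracts by the
factor `2(1 − α|Y|)`; in particular if `α > 1/(2|Y|)` both the gap and the disparity
`Δ_t` tend to `0`. -/
theorem stmt_12 (Y : Finset ℝ) (hY : ∀ y ∈ Y, y ≠ 0)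
    (q : ℝ → ℝ → Bool → ℝ) (hq : IsKernel Y q)
    (wA wB : ℝ) (hwA : 0 < wA) (hwB : 0 < wB) (hw : wA + wB = 1)
    (g : ℝ → ℝ) (hg : AdmissiblePenalty g) (lam : ℝ) (hlam : 0 ≤ lam)
    (pA pB : ℕ → ℝ → ℝ) (πt : ℕ → Bool → ℝ → ℝ)
    (hA0 : IsDist Y (pA 0)) (hB0 : IsDist Y (pB 0))
    (htraj : Trajectory Y q wA wB g lam pA pB πt)
    (α : ℝ)
    (hα : α = sInf {x : ℝ | ∃ y ∈ Y, ∃ y' ∈ Y, ∃ d : Bool, x = q y y' d}) :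
    (∀ t, ∑ y ∈ Y, |pA (t + 1) y - pB (t + 1) y| ≤
        2 * (1 - α * Y.card) * ∑ y ∈ Y, |pA t y - pB t y|) ∧
    (1 / (2 * Y.card) < α →
      Tendsto (fun t => ∑ y ∈ Y, |pA t y - pB t y|) atTop (𝓝 0) ∧
      Tendsto (fun t => dDisp Y (pA t) (pB t) (πt t)) atTop (𝓝 0)) := by
  classical
  have hdists : ∀ t, IsDist Y (pA t) ∧ IsDist Y (pB t) := by
    intro t
    induction t with
    | zero => exact ⟨hA0, hB0⟩
    | succ n ih =>
      obtain ⟨hopt, hsA, hsB⟩ := htraj n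
      have hA' := step_isDist Y q hq (pA n) (πt n true) ih.1 (fun y hy => hopt.1 true y hy)
      have hB' := step_isDist Y q hq (pB n) (πt n false) ih.2 (fun y hy => hopt.1 false y hy)
      constructor
      · constructor
        · intro y hy; rw [hsA y hy]; exact hA'.1 y hy
        · rw [Finset.sum_congr rfl hsA]; exact hA'.2
      · constructor
        · intro y hy; rw [hsB y hy]; exact hB'.1 y hy
        · rw [Finset.sum_congr rfl hsB]; exact hB'.2
  have hql := alpha_le Y q hq α hα
  have hMle : ∀ t, 2 * ∑ y ∈ Y, min (pA t y) (pB t y) * |πt t true y - πt t false y|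
      ≤ ∑ y ∈ Y, |pA t y - pB t y| := fun t =>
    M_le Y hY wA wB hwA hwB (pA t) (pB t) g hg lam hlam (πt t) (htraj t).1
      (hdists t).1 (hdists t).2
  have hpart1 : ∀ t, ∑ y ∈ Y, |pA (t + 1) y - pB (t + 1) y| ≤
      2 * (1 - α * Y.card) * ∑ y ∈ Y, |pA t y - pB t y| := by
    intro t
    obtain ⟨hopt, hsA, hsB⟩ := htraj t
    have he : ∑ y ∈ Y, |pA (t + 1) y - pB (t + 1) y|
        = ∑ y ∈ Y, |stepDist Y q (pA t) (πt t true) y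
            - stepDist Y q (pB t) (πt t false) y| :=
      Finset.sum_congr rfl (fun y hy => by rw [hsA y hy, hsB y hy])
    rw [he]
    exact contraction Y q hq α hql (pA t) (pB t) (hdists t).1 (hdists t).2
      (πt t true) (πt t false) (fun y hy => hopt.1 true y hy)
      (fun y hy => hopt.1 false y hy) (hMle t)
  refine ⟨hpart1, ?_⟩
  intro hbig
  have hYne : Y.Nonempty := by
    rcases Finset.eq_empty_or_nonempty Y with rfl | h
    · exfalso
      have hset : {x : ℝ | ∃ y ∈ (∅ : Finset ℝ), ∃ y' ∈ (∅ : Finset ℝ),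
          ∃ d : Bool, x = q y y' d} = ∅ := by
        ext x; simp
      rw [hset, Real.sInf_empty] at hα
      rw [hα] at hbig
      norm_num at hbig
    · exact h
  obtain ⟨y0, hy0⟩ := hYne
  have hnpos : (0:ℝ) < Y.card := by
    have h := Finset.card_pos.mpr ⟨y0, hy0⟩
    exact_mod_cast h
  have hαn : α * Y.card ≤ 1 := by
    have hle : ∑ _y ∈ Y, α ≤ ∑ y ∈ Y, q y y0 true :=
      Finset.sum_le_sum (fun y hy => hql y hy y0 hy0 true)
    rw [Finset.sum_const, nsmul_eq_mul, hq.2 y0 hy0 true] at hle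
    rw [mul_comm]
    exact hle
  have hhalf : 1 / 2 < α * Y.card := by
    have h2n : (0:ℝ) < 2 * Y.card := by linarith
    rw [div_lt_iff₀ h2n] at hbig
    have he : α * (2 * Y.card) = 2 * (α * Y.card) := by ring
    rw [he] at hbig
    linarith
  set c : ℝ := 2 * (1 - α * Y.card) with hc
  have hc0 : 0 ≤ c := by rw [hc]; linarith
  have hc1 : c < 1 := by rw [hc]; linarith
  set S : ℕ → ℝ := fun t => ∑ y ∈ Y, |pA t y - pB t y| with hS
  have hS0 : ∀ t, 0 ≤ S t := fun t => Finset.sum_nonneg (fun y _ => abs_nonneg _)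
  have hSgeom : ∀ t, S t ≤ c ^ t * S 0 := by
    intro t
    induction t with
    | zero => simp
    | succ n ih =>
      calc S (n + 1) ≤ c * S n := hpart1 n
        _ ≤ c * (c ^ n * S 0) := mul_le_mul_of_nonneg_left ih hc0
        _ = c ^ (n + 1) * S 0 := by ring
  have hgeo : Tendsto (fun t => c ^ t * S 0) atTop (𝓝 0) := by
    have h := tendsto_pow_atTop_nhds_zero_of_lt_one hc0 hc1
    simpa using h.mul_const (S 0)
  have hTV : Tendsto S atTop (𝓝 0) := squeeze_zero hS0 hSgeom hgeo
  refine ⟨hTV, ?_⟩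
  have hd0 : ∀ t, 0 ≤ dDisp Y (pA t) (pB t) (πt t) := by
    intro t; unfold dDisp; positivity
  have hdb : ∀ t, dDisp Y (pA t) (pB t) (πt t) ≤ 2 * S t := by
    intro t
    unfold dDisp
    exact disp_bound Y (pA t) (pB t) (πt t true) (πt t false)
      (hdists t).1.1 (hdists t).2.1
      (fun y hy => (htraj t).1.1 true y hy) (fun y hy => (htraj t).1.1 false y hy)
      (hdists t).1.2 (hdists t).2.2 (hMle t)
  have h2S : Tendsto (fun t => 2 * S t) atTop (𝓝 0) := by
    simpa using hTV.const_mul 2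
  exact squeeze_zero hd0 hdb h2S
end
end

section
/- (Monotone profit.) Assume that selection improves qualifications on average: ∑_{y'} y'·q(y'|y,1) ≥ y for every y ∈ 𝒴 (no assumption is made on q(·|y,0)). Then for any λ ≥ 0, any nondecreasing nonnegative convex g with g(0)=0, and any initial distributions p_0(y|c), the optimal objective value Profit(t) = max_π J_t(π) is a non-decreasing function of t along the myopic dynamics. -/
/-!
Dynamic setting: `Y` is a finite set of nonzero real qualifications; groups `A`/`B`
are encoded as `true`/`false` with weights `wA`/`wB`; `q y y' d` is the probability
of moving to qualification `y` from `y'` under decision `d`; `pA t`/`pB t` are the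
group qualification distributions at time `t`, and at every step the institution
uses a myopic maximizer of the penalized objective.
-/

open Finset Filter Topology
open scoped Classical

noncomputable section

lemma stepDist_nonneg' (Y : Finset ℝ) (q : ℝ → ℝ → Bool → ℝ) (hq : IsKernel Y q)
    (r sel : ℝ → ℝ) (hr : ∀ y ∈ Y, 0 ≤ r y)
    (hsel : ∀ y ∈ Y, 0 ≤ sel y ∧ sel y ≤ 1) :
    ∀ y ∈ Y, 0 ≤ stepDist Y q r sel y := by
  intro y hy
  apply Finset.sum_nonneg
  intro y' hy'
  have h1 := hq.1 y hy y' hy' true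
  have h0 := hq.1 y hy y' hy' false
  have hs := hsel y' hy'
  have hr' := hr y' hy'
  have : 0 ≤ sel y' * q y y' true + (1 - sel y') * q y y' false := by
    have := mul_nonneg hs.1 h1
    have := mul_nonneg (by linarith [hs.2] : (0:ℝ) ≤ 1 - sel y') h0
    linarith
  exact mul_nonneg hr' this

lemma key_step (Y : Finset ℝ) (q : ℝ → ℝ → Bool → ℝ) (hq : IsKernel Y q)
    (hgrow : ∀ y ∈ Y, y ≤ ∑ y' ∈ Y, y' * q y' y true)
    (r sel : ℝ → ℝ) (hr : ∀ y ∈ Y, 0 ≤ r y)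
    (hsel : ∀ y ∈ Y, 0 ≤ sel y ∧ sel y ≤ 1) :
    ∃ sel' : ℝ → ℝ, (∀ y ∈ Y, 0 ≤ sel' y ∧ sel' y ≤ 1) ∧
      (∑ y ∈ Y, stepDist Y q r sel y * sel' y = ∑ y ∈ Y, r y * sel y) ∧
      (∑ y ∈ Y, r y * y * sel y ≤ ∑ y ∈ Y, stepDist Y q r sel y * y * sel' y) := by
  classical
  set num : ℝ → ℝ := fun y => ∑ y' ∈ Y, r y' * sel y' * q y y' true with hnumdef
  have hnum0 : ∀ y ∈ Y, 0 ≤ num y := by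
    intro y hy
    apply Finset.sum_nonneg
    intro y' hy'
    exact mul_nonneg (mul_nonneg (hr y' hy') (hsel y' hy').1) (hq.1 y hy y' hy' true)
  have hnumle : ∀ y ∈ Y, num y ≤ stepDist Y q r sel y := by
    intro y hy
    apply Finset.sum_le_sum
    intro y' hy'
    have h0 := hq.1 y hy y' hy' false
    have hs := hsel y' hy'
    have hr' := hr y' hy'
    have hkey : 0 ≤ r y' * ((1 - sel y') * q y y' false) :=
      mul_nonneg hr' (mul_nonneg (by linarith [hs.2]) h0)
    nlinarith [hkey]
  refine ⟨fun y => if stepDist Y q r sel y = 0 then 0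
      else num y / stepDist Y q r sel y, ?_, ?_, ?_⟩
  · intro y hy
    by_cases h : stepDist Y q r sel y = 0
    · simp [h]
    · have hpos : 0 < stepDist Y q r sel y :=
        lt_of_le_of_ne (le_trans (hnum0 y hy) (hnumle y hy)) (Ne.symm h)
      simp only [h, if_false]
      exact ⟨div_nonneg (hnum0 y hy) hpos.le, (div_le_one hpos).2 (hnumle y hy)⟩
  · have hprod : ∀ y ∈ Y, stepDist Y q r sel y *
        (if stepDist Y q r sel y = 0 then 0 else num y / stepDist Y q r sel y) = num y := by
      intro y hy
      by_cases h : stepDist Y q r sel y = 0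
      · have : num y = 0 := le_antisymm (by rw [← h]; exact hnumle y hy) (hnum0 y hy)
        simp [h, this]
      · rw [if_neg h, div_eq_mul_inv]; linear_combination (num y) * mul_inv_cancel₀ h
    rw [Finset.sum_congr rfl hprod]
    rw [show ∑ y ∈ Y, num y = ∑ y' ∈ Y, ∑ y ∈ Y, r y' * sel y' * q y y' true from
      Finset.sum_comm]
    apply Finset.sum_congr rfl
    intro y' hy'
    rw [← Finset.mul_sum, hq.2 y' hy' true, mul_one]
  · have hprod : ∀ y ∈ Y, stepDist Y q r sel y * y *
        (if stepDist Y q r sel y = 0 then 0 else num y / stepDist Y q r sel y)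
        = num y * y := by
      intro y hy
      by_cases h : stepDist Y q r sel y = 0
      · have : num y = 0 := le_antisymm (by rw [← h]; exact hnumle y hy) (hnum0 y hy)
        simp [h, this]
      · rw [if_neg h, div_eq_mul_inv]; linear_combination (num y * y) * mul_inv_cancel₀ h
    rw [Finset.sum_congr rfl hprod]
    have hre : ∀ y ∈ Y, num y * y = ∑ y' ∈ Y, r y' * sel y' * (y * q y y' true) := by
      intro y hy
      rw [hnumdef]
      rw [Finset.sum_mul]
      apply Finset.sum_congr rfl
      intro y' _
      ring
    rw [Finset.sum_congr rfl hre, Finset.sum_comm]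
    apply Finset.sum_le_sum
    intro y' hy'
    rw [← Finset.mul_sum]
    have hS : y' ≤ ∑ y ∈ Y, y * q y y' true := hgrow y' hy'
    have hrs : 0 ≤ r y' * sel y' := mul_nonneg (hr y' hy') (hsel y' hy').1
    calc r y' * y' * sel y' = r y' * sel y' * y' := by ring
      _ ≤ r y' * sel y' * ∑ y ∈ Y, y * q y y' true :=
          mul_le_mul_of_nonneg_left hS hrs

/-- Monotone profit. If selection improves qualifications on
average, i.e. `∑_{y'} y'·q(y'|y,1) ≥ y` for every `y ∈ Y`, then along any trajectory
of the myopic dynamics the optimal objective value `Profit(t) = max_π J_t(π)` is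
non-decreasing in `t`. -/
theorem stmt_13 (Y : Finset ℝ) (hY : ∀ y ∈ Y, y ≠ 0)
    (q : ℝ → ℝ → Bool → ℝ) (hq : IsKernel Y q)
    (hgrow : ∀ y ∈ Y, y ≤ ∑ y' ∈ Y, y' * q y' y true)
    (wA wB : ℝ) (hwA : 0 < wA) (hwB : 0 < wB) (hw : wA + wB = 1)
    (g : ℝ → ℝ) (hg : AdmissiblePenalty g) (lam : ℝ) (hlam : 0 ≤ lam)
    (pA pB : ℕ → ℝ → ℝ) (πt : ℕ → Bool → ℝ → ℝ)
    (hA0 : IsDist Y (pA 0)) (hB0 : IsDist Y (pB 0))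
    (htraj : Trajectory Y q wA wB g lam pA pB πt) :
    Monotone (fun t => dObj Y wA wB (pA t) (pB t) g lam (πt t)) := by
  classical
  -- nonnegativity of the distributions at every time
  have hp : ∀ t, (∀ y ∈ Y, 0 ≤ pA t y) ∧ (∀ y ∈ Y, 0 ≤ pB t y) := by
    intro t
    induction t with
    | zero => exact ⟨hA0.1, hB0.1⟩
    | succ t ih =>
      obtain ⟨⟨hadm, _⟩, hAs, hBs⟩ := htraj t
      refine ⟨fun y hy => ?_, fun y hy => ?_⟩
      · rw [hAs y hy]
        exact stepDist_nonneg' Y q hq _ _ ih.1 (fun y hy => hadm true y hy) y hy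
      · rw [hBs y hy]
        exact stepDist_nonneg' Y q hq _ _ ih.2 (fun y hy => hadm false y hy) y hy
  apply monotone_nat_of_le_succ
  intro t
  obtain ⟨⟨hadm, _⟩, hAs, hBs⟩ := htraj t
  obtain ⟨⟨_, hoptmax'⟩, _, _⟩ := htraj (t + 1)
  obtain ⟨selA', hA'bd, hA'rate, hA'util⟩ :=
    key_step Y q hq hgrow (pA t) (πt t true) (hp t).1 (fun y hy => hadm true y hy)
  obtain ⟨selB', hB'bd, hB'rate, hB'util⟩ :=
    key_step Y q hq hgrow (pB t) (πt t false) (hp t).2 (fun y hy => hadm false y hy)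
  set π' : Bool → ℝ → ℝ := fun c y => if c then selA' y else selB' y with hπ'
  have hadmπ' : Admissible Y π' := by
    intro c y hy
    cases c
    · simpa [hπ'] using hB'bd y hy
    · simpa [hπ'] using hA'bd y hy
  have hArate : ∑ y ∈ Y, pA (t + 1) y * π' true y = ∑ y ∈ Y, pA t y * πt t true y := by
    rw [Finset.sum_congr rfl (fun y hy => by rw [hAs y hy])]
    simpa [hπ'] using hA'rate
  have hBrate : ∑ y ∈ Y, pB (t + 1) y * π' false y = ∑ y ∈ Y, pB t y * πt t false y := by
    rw [Finset.sum_congr rfl (fun y hy => by rw [hBs y hy])]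
    simpa [hπ'] using hB'rate
  have hAutil : ∑ y ∈ Y, pA t y * y * πt t true y
      ≤ ∑ y ∈ Y, pA (t + 1) y * y * π' true y := by
    have he : ∑ y ∈ Y, pA (t + 1) y * y * π' true y
        = ∑ y ∈ Y, stepDist Y q (pA t) (πt t true) y * y * selA' y :=
      Finset.sum_congr rfl (fun y hy => by rw [hAs y hy]; simp [hπ'])
    rw [he]; exact hA'util
  have hButil : ∑ y ∈ Y, pB t y * y * πt t false y
      ≤ ∑ y ∈ Y, pB (t + 1) y * y * π' false y := by
    have he : ∑ y ∈ Y, pB (t + 1) y * y * π' false y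
        = ∑ y ∈ Y, stepDist Y q (pB t) (πt t false) y * y * selB' y :=
      Finset.sum_congr rfl (fun y hy => by rw [hBs y hy]; simp [hπ'])
    rw [he]; exact hB'util
  have hdisp : dDisp Y (pA (t + 1)) (pB (t + 1)) π' = dDisp Y (pA t) (pB t) (πt t) := by
    unfold dDisp
    rw [hArate, hBrate]
  have hutil : dUtil Y wA wB (pA t) (pB t) (πt t)
      ≤ dUtil Y wA wB (pA (t + 1)) (pB (t + 1)) π' := by
    unfold dUtil
    have h1 := mul_le_mul_of_nonneg_left hAutil hwA.le
    have h2 := mul_le_mul_of_nonneg_left hButil hwB.le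
    linarith
  have h1 : dObj Y wA wB (pA t) (pB t) g lam (πt t)
      ≤ dObj Y wA wB (pA (t + 1)) (pB (t + 1)) g lam π' := by
    unfold dObj
    rw [hdisp]
    linarith
  exact le_trans h1 (hoptmax' π' hadmπ')
end
end

section
/- (Existence of equal stationary states.) Define the Markov transition kernel T on 𝒴 by T(y'|y) = q(y'|y,1) if y > 0 and T(y'|y) = q(y'|y,0) if y < 0, and let r be any stationary distribution of T. Then the state in which both groups have qualification distribution r, together with the threshold policy π(1|c,y) = 1 if y > 0 and 0 if y < 0, is a stationary state of the myopic dynamics: the threshold policy is a maximizer of J for this state, and both group distributions are unchanged at the next step. In this stationary state the selection rates of the two groups are equal. -/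
/-!
Dynamic setting: `Y` is a finite set of nonzero real qualifications; groups `A`/`B`
are encoded as `true`/`false` with weights `wA`/`wB`; `q y y' d` is the probability
of moving to qualification `y` from `y'` under decision `d`; `pA t`/`pB t` are the
group qualification distributions at time `t`, and at every step the institution
uses a myopic maximizer of the penalized objective.
-/

open Finset Filter Topology
open scoped Classical

noncomputable section

/-- Existence of equal stationary states. Let `r` be any stationary
distribution of the kernel `T(y'|y) = q(y'|y,1)` for `y > 0` and `q(y'|y,0)` for
`y < 0`. Then the state where both groups have distribution `r`, together with the
threshold policy, is a stationary state of the myopic dynamics: the threshold policy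
maximizes `J`, both group distributions are unchanged at the next step, and the two
groups have equal selection rates. -/
theorem stmt_14 (Y : Finset ℝ) (hY : ∀ y ∈ Y, y ≠ 0)
    (q : ℝ → ℝ → Bool → ℝ) (hq : IsKernel Y q)
    (wA wB : ℝ) (hwA : 0 < wA) (hwB : 0 < wB) (hw : wA + wB = 1)
    (g : ℝ → ℝ) (hg : AdmissiblePenalty g) (lam : ℝ) (hlam : 0 ≤ lam)
    (r : ℝ → ℝ) (hr : IsDist Y r)
    (hstat : ∀ y ∈ Y, r y =
      ∑ y' ∈ Y, r y' * (if 0 < y' then q y y' true else q y y' false)) :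
    dOptimal Y wA wB r r g lam (fun _ => thr) ∧
    (∀ y ∈ Y, stepDist Y q r thr y = r y) ∧
    (∑ y ∈ Y, r y * thr y) = ∑ y ∈ Y, r y * thr y := by
  classical
  obtain ⟨hr0, hr1⟩ := hr
  have hthr01 : ∀ y : ℝ, 0 ≤ thr y ∧ thr y ≤ 1 := by
    intro y; unfold thr; split <;> norm_num
  have hutil : ∀ π' : Bool → ℝ → ℝ, Admissible Y π' → ∀ c,
      ∑ y ∈ Y, r y * y * π' c y ≤ ∑ y ∈ Y, r y * y * thr y := by
    intro π' hπ' c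
    apply Finset.sum_le_sum
    intro y hy
    rcases lt_or_gt_of_ne (hY y hy) with hneg | hpos
    · have h1 : r y * y ≤ 0 := mul_nonpos_of_nonneg_of_nonpos (hr0 y hy) hneg.le
      have : thr y = 0 := by unfold thr; simp [not_lt.mpr hneg.le]
      rw [this, mul_zero]
      exact mul_nonpos_of_nonpos_of_nonneg h1 ((hπ' c y hy).1)
    · have h1 : 0 ≤ r y * y := mul_nonneg (hr0 y hy) hpos.le
      have : thr y = 1 := by unfold thr; simp [hpos]
      rw [this, mul_one]
      calc r y * y * π' c y ≤ r y * y * 1 := by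
            exact mul_le_mul_of_nonneg_left ((hπ' c y hy).2) h1
        _ = r y * y := mul_one _
  refine ⟨⟨fun c y hy => hthr01 y, ?_⟩, ?_, rfl⟩
  · intro π' hπ'
    have hdisp : dDisp Y r r (fun _ => thr) = 0 := by
      unfold dDisp; simp
    have hobj : dObj Y wA wB r r g lam (fun _ => thr)
        = dUtil Y wA wB r r (fun _ => thr) := by
      unfold dObj; rw [hdisp, hg.1, mul_zero, sub_zero]
    rw [hobj]
    have hpen : 0 ≤ lam * g (dDisp Y r r π') := by
      apply mul_nonneg hlam
      exact hg.2.2.2 _ (Set.mem_Ici.mpr (abs_nonneg _))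
    unfold dObj dUtil
    have hA := hutil π' hπ' true
    have hB := hutil π' hπ' false
    nlinarith [hA, hB, hwA.le, hwB.le]
  · intro y hy
    rw [(hstat y hy)]
    unfold stepDist
    apply Finset.sum_congr rfl
    intro y' hy'
    congr 1
    unfold thr
    split <;> ring
end
end

section
/- (Unique stationary state for slowly-changing qualifications.) Write 𝒴 = {y⁽¹⁾ < y⁽²⁾ < ⋯ < y⁽ⁿ⁾} (all nonzero). Assume the birth–death structure q(y⁽ⁱ⁾|y⁽ʲ⁾, d) > 0 if and only if |i − j| ≤ 1 (for both d ∈ {0,1}), and that selection helps: q(y⁽ⁱ⁺¹⁾|y⁽ⁱ⁾, 1) ≥ q(y⁽ⁱ⁺¹⁾|y⁽ⁱ⁾, 0) for all 1 ≤ i < n, and q(y⁽ⁱ⁻¹⁾|y⁽ⁱ⁾, 1) ≤ q(y⁽ⁱ⁻¹⁾|y⁽ⁱ⁾, 0) for all 1 < i ≤ n. Then for any λ ≥ 0 and any admissible penalty g, the myopic dynamics has a unique stationary state; in this stationary state the two groups have identical qualification distributions, equal to the unique stationary distribution of the kernel T(y'|y) = q(y'|y,1) if y > 0, T(y'|y)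 = q(y'|y,0) if y < 0. -/
/-!
Dynamic setting indexed by `Fin n`: qualifications `yv 0 < yv 1 < ⋯ < yv (n-1)` (all
nonzero); `q j i d` is the probability of moving to qualification `yv j` from `yv i`
under decision `d`; groups `A`/`B` are `true`/`false` with weights `wA`/`wB`.
-/

open Finset Filter Topology
open scoped Classical

noncomputable section

/-- `r` is a probability distribution on `Fin n`. -/
def IsDistF {n : ℕ} (r : Fin n → ℝ) : Prop := (∀ i, 0 ≤ r i) ∧ ∑ i, r i = 1

/-- A policy assigns selection probabilities in `[0,1]`. -/
def AdmF {n : ℕ} (π : Bool → Fin n → ℝ) : Prop := ∀ c i, 0 ≤ π c i ∧ π c i ≤ 1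

/-- One-step update of a group distribution `r` under selection probabilities `sel`. -/
def stepF {n : ℕ} (q : Fin n → Fin n → Bool → ℝ) (r sel : Fin n → ℝ) (j : Fin n) : ℝ :=
  ∑ i, r i * (sel i * q j i true + (1 - sel i) * q j i false)

/-- Instantaneous penalized objective for the state `(rA, rB)`. -/
def dObjF {n : ℕ} (yv : Fin n → ℝ) (wA wB : ℝ) (rA rB : Fin n → ℝ) (g : ℝ → ℝ)
    (lam : ℝ) (π : Bool → Fin n → ℝ) : ℝ :=
  (wA * ∑ i, rA i * yv i * π true i + wB * ∑ i, rB i * yv i * π false i) -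
    lam * g (|(∑ i, rA i * π true i) - ∑ i, rB i * π false i|)

/-- A stationary state: a myopic-optimal policy whose induced update leaves both
group distributions unchanged. -/
def StatStateF {n : ℕ} (yv : Fin n → ℝ) (q : Fin n → Fin n → Bool → ℝ)
    (wA wB : ℝ) (g : ℝ → ℝ) (lam : ℝ) (rA rB : Fin n → ℝ)
    (π : Bool → Fin n → ℝ) : Prop :=
  AdmF π ∧
    (∀ π', AdmF π' → dObjF yv wA wB rA rB g lam π' ≤ dObjF yv wA wB rA rB g lam π) ∧
    (∀ j, stepF q rA (π true) j = rA j) ∧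
    (∀ j, stepF q rB (π false) j = rB j)



section Kernel
variable {n : ℕ}

/-- Column partial sums for a tridiagonal stochastic kernel. -/
lemma colsum_band (M : Fin n → Fin n → ℝ)
    (hz : ∀ j i : Fin n, (j:ℕ)+1 < (i:ℕ) ∨ (i:ℕ)+1 < (j:ℕ) → M j i = 0)
    (hrow : ∀ i, ∑ j, M j i = 1) (k : ℕ) (hk : k + 1 < n) (i : Fin n) :
    ∑ j ∈ univ.filter (fun j : Fin n => (j:ℕ) ≤ k), M j i =
      (if (i:ℕ) ≤ k then 1 else 0)
        - (if (i:ℕ) = k then M ⟨k+1, hk⟩ i else 0)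
        + (if (i:ℕ) = k+1 then M ⟨k, by omega⟩ i else 0) := by
  rcases le_or_gt (i:ℕ) k with hi | hi
  · have hsplit : (∑ j ∈ univ.filter (fun j : Fin n => (j:ℕ) ≤ k), M j i)
        + ∑ j ∈ univ.filter (fun j : Fin n => ¬ (j:ℕ) ≤ k), M j i = 1 := by
      rw [Finset.sum_filter_add_sum_filter_not]; exact hrow i
    rcases eq_or_lt_of_le hi with hik | hik
    · have hcompl : ∑ j ∈ univ.filter (fun j : Fin n => ¬ (j:ℕ) ≤ k), M j i
          = M ⟨k+1, hk⟩ i := by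
        apply Finset.sum_eq_single_of_mem
        · simp
        · intro j hj hne
          apply hz
          simp only [Finset.mem_filter, Finset.mem_univ, true_and, not_le] at hj
          have : (j:ℕ) ≠ k+1 := by
            intro h; apply hne; apply Fin.ext; simp [h]
          omega
      rw [if_pos hi, if_pos hik, if_neg (by omega)]
      linarith [hsplit, hcompl]
    · have hcompl : ∑ j ∈ univ.filter (fun j : Fin n => ¬ (j:ℕ) ≤ k), M j i = 0 := by
        apply Finset.sum_eq_zero
        intro j hj
        simp only [Finset.mem_filter, Finset.mem_univ, true_and, not_le] at hj
        apply hz; omega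
      rw [if_pos hi, if_neg (by omega), if_neg (by omega)]
      linarith [hsplit, hcompl]
  · rcases eq_or_lt_of_le (by omega : k + 1 ≤ (i:ℕ)) with hik | hik
    · have : ∑ j ∈ univ.filter (fun j : Fin n => (j:ℕ) ≤ k), M j i
          = M ⟨k, by omega⟩ i := by
        apply Finset.sum_eq_single_of_mem
        · simp
        · intro j hj hne
          apply hz
          simp only [Finset.mem_filter, Finset.mem_univ, true_and] at hj
          have : (j:ℕ) ≠ k := by
            intro h; apply hne; apply Fin.ext; simp [h]
          omega
      rw [this, if_neg (by omega), if_neg (by omega), if_pos (by omega)]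
      ring
    · have : ∑ j ∈ univ.filter (fun j : Fin n => (j:ℕ) ≤ k), M j i = 0 := by
        apply Finset.sum_eq_zero
        intro j hj
        simp only [Finset.mem_filter, Finset.mem_univ, true_and] at hj
        apply hz; omega
      rw [this, if_neg (by omega), if_neg (by omega), if_neg (by omega)]
      ring

end Kernel
section Kernel2
variable {n : ℕ}

lemma sum_ite_val_eq (k : ℕ) (hk : k < n) (X : Fin n → ℝ) :
    ∑ i : Fin n, (if (i:ℕ) = k then X i else 0) = X ⟨k, hk⟩ := by
  rw [Finset.sum_eq_single_of_mem ⟨k, hk⟩ (Finset.mem_univ _)]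
  · simp
  · intro j _ hne
    rw [if_neg]
    intro h; apply hne; exact Fin.ext h

lemma partial_flux (M : Fin n → Fin n → ℝ)
    (hz : ∀ j i : Fin n, (j:ℕ)+1 < (i:ℕ) ∨ (i:ℕ)+1 < (j:ℕ) → M j i = 0)
    (hrow : ∀ i, ∑ j, M j i = 1) (r : Fin n → ℝ) (k : ℕ) (hk : k + 1 < n) :
    ∑ j ∈ univ.filter (fun j : Fin n => (j:ℕ) ≤ k), (∑ i, r i * M j i)
      = (∑ j ∈ univ.filter (fun j : Fin n => (j:ℕ) ≤ k), r j)
        - r ⟨k, by omega⟩ * M ⟨k+1, hk⟩ ⟨k, by omega⟩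
        + r ⟨k+1, hk⟩ * M ⟨k, by omega⟩ ⟨k+1, hk⟩ := by
  rw [Finset.sum_comm]
  have : ∀ i : Fin n, ∑ j ∈ univ.filter (fun j : Fin n => (j:ℕ) ≤ k), r i * M j i
      = r i * ((if (i:ℕ) ≤ k then 1 else 0)
        - (if (i:ℕ) = k then M ⟨k+1, hk⟩ i else 0)
        + (if (i:ℕ) = k+1 then M ⟨k, by omega⟩ i else 0)) := by
    intro i
    rw [← Finset.mul_sum, colsum_band M hz hrow k hk i]
  simp only [this, mul_add, mul_sub]
  rw [Finset.sum_add_distrib, Finset.sum_sub_distrib]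
  congr 1
  congr 1
  · rw [Finset.sum_filter]
    apply Finset.sum_congr rfl
    intro i _; split_ifs <;> ring
  · rw [← sum_ite_val_eq k (by omega) (fun i => r i * M ⟨k+1, hk⟩ i)]
    apply Finset.sum_congr rfl
    intro i _
    split_ifs <;> ring
  · rw [← sum_ite_val_eq (k+1) hk (fun i => r i * M ⟨k, by omega⟩ i)]
    apply Finset.sum_congr rfl
    intro i _
    split_ifs <;> ring

lemma stationary_db (M : Fin n → Fin n → ℝ)
    (hz : ∀ j i : Fin n, (j:ℕ)+1 < (i:ℕ) ∨ (i:ℕ)+1 < (j:ℕ) → M j i = 0)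
    (hrow : ∀ i, ∑ j, M j i = 1) (r : Fin n → ℝ)
    (hst : ∀ j, ∑ i, r i * M j i = r j) (k : ℕ) (hk : k + 1 < n) :
    r ⟨k, by omega⟩ * M ⟨k+1, hk⟩ ⟨k, by omega⟩
      = r ⟨k+1, hk⟩ * M ⟨k, by omega⟩ ⟨k+1, hk⟩ := by
  have h := partial_flux M hz hrow r k hk
  simp only [hst] at h
  linarith

lemma db_stationary (M : Fin n → Fin n → ℝ)
    (hz : ∀ j i : Fin n, (j:ℕ)+1 < (i:ℕ) ∨ (i:ℕ)+1 < (j:ℕ) → M j i = 0)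
    (hrow : ∀ i, ∑ j, M j i = 1) (r : Fin n → ℝ)
    (hdb : ∀ k (hk : k + 1 < n),
      r ⟨k, by omega⟩ * M ⟨k+1, hk⟩ ⟨k, by omega⟩
        = r ⟨k+1, hk⟩ * M ⟨k, by omega⟩ ⟨k+1, hk⟩) :
    ∀ j, ∑ i, r i * M j i = r j := by
  have key : ∀ k, k < n →
      ∑ j ∈ univ.filter (fun j : Fin n => (j:ℕ) ≤ k), (∑ i, r i * M j i)
        = ∑ j ∈ univ.filter (fun j : Fin n => (j:ℕ) ≤ k), r j := by
    intro k hkn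
    rcases lt_or_ge (k+1) n with hk | hk
    · rw [partial_flux M hz hrow r k hk, hdb k hk]; ring
    · have huniv : univ.filter (fun j : Fin n => (j:ℕ) ≤ k) = univ := by
        ext x; simp; omega
      rw [huniv]
      rw [Finset.sum_comm]
      have : ∀ i : Fin n, ∑ j : Fin n, r i * M j i = r i := by
        intro i; rw [← Finset.mul_sum, hrow i, mul_one]
      simp only [this]
  intro j
  rcases Nat.eq_zero_or_pos (j:ℕ) with hj0 | hj0
  · have h := key 0 (by omega)
    have hset : univ.filter (fun x : Fin n => (x:ℕ) ≤ 0) = {j} := by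
      ext x; simp [Fin.ext_iff]; omega
    rw [hset, Finset.sum_singleton, Finset.sum_singleton] at h
    exact h
  · obtain ⟨m, hm⟩ : ∃ m, (j:ℕ) = m + 1 := ⟨(j:ℕ) - 1, by omega⟩
    have h1 := key (m+1) (by omega)
    have h2 := key m (by omega)
    have hset : univ.filter (fun x : Fin n => (x:ℕ) ≤ m+1)
        = insert j (univ.filter (fun x : Fin n => (x:ℕ) ≤ m)) := by
      ext x; simp [Fin.ext_iff]; omega
    have hnotmem : j ∉ univ.filter (fun x : Fin n => (x:ℕ) ≤ m) := by
      simp; omega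
    rw [hset, Finset.sum_insert hnotmem, Finset.sum_insert hnotmem] at h1
    linarith

/-- strict positivity of a stationary distribution of an irreducible tridiagonal kernel -/
lemma stationary_pos (M : Fin n → Fin n → ℝ)
    (hMnn : ∀ j i, 0 ≤ M j i)
    (hpos : ∀ j i : Fin n, (j:ℕ) ≤ (i:ℕ)+1 → (i:ℕ) ≤ (j:ℕ)+1 → 0 < M j i)
    (r : Fin n → ℝ) (hr0 : ∀ i, 0 ≤ r i) (hr1 : ∑ i, r i = 1)
    (hst : ∀ j, ∑ i, r i * M j i = r j) : ∀ i, 0 < r i := by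
  have step : ∀ (i j : Fin n), (j:ℕ) ≤ (i:ℕ)+1 → (i:ℕ) ≤ (j:ℕ)+1 → 0 < r i → 0 < r j := by
    intro i j h1 h2 hri
    have hle : r i * M j i ≤ ∑ k, r k * M j k :=
      Finset.single_le_sum (fun k _ => mul_nonneg (hr0 k) (hMnn j k)) (Finset.mem_univ i)
    have : 0 < r i * M j i := mul_pos hri (hpos j i h1 h2)
    rw [hst j] at hle
    linarith
  obtain ⟨i0, hi0⟩ : ∃ i, 0 < r i := by
    by_contra h
    push_neg at h
    have : ∑ i, r i ≤ 0 := Finset.sum_nonpos (fun i _ => h i)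
    linarith
  have up : ∀ d (h : (i0:ℕ) + d < n), 0 < r ⟨(i0:ℕ) + d, h⟩ := by
    intro d
    induction d with
    | zero => intro h; simpa using hi0
    | succ m ih =>
      intro h
      exact step ⟨(i0:ℕ)+m, by omega⟩ _ (by simp only [Fin.val_mk]; omega) (by simp only [Fin.val_mk]; omega) (ih (by omega))
  have down : ∀ d, d ≤ (i0:ℕ) → 0 < r ⟨(i0:ℕ) - d, by omega⟩ := by
    intro d
    induction d with
    | zero => intro _; simpa using hi0
    | succ m ih =>
      intro h
      refine step ⟨(i0:ℕ)-m, by omega⟩ _ (by simp only [Fin.val_mk]; omega) (by simp only [Fin.val_mk]; omega) (ih (by omega))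
  intro i
  rcases le_or_gt (i0:ℕ) (i:ℕ) with h | h
  · have := up ((i:ℕ) - (i0:ℕ)) (by omega)
    have he : (⟨(i0:ℕ) + ((i:ℕ) - (i0:ℕ)), by omega⟩ : Fin n) = i := by
      apply Fin.ext; simp; omega
    rwa [he] at this
  · have := down ((i0:ℕ) - (i:ℕ)) (by omega)
    have he : (⟨(i0:ℕ) - ((i0:ℕ) - (i:ℕ)), by omega⟩ : Fin n) = i := by
      apply Fin.ext; simp; omega
    rwa [he] at this

end Kernel2
section MLR
variable {n : ℕ}

/-- Likelihood-ratio order implies upper-set (tail) domination. -/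
lemma mlr_tail (r r' : Fin n → ℝ) (hr : ∀ i, 0 < r i) (hr' : ∀ i, 0 < r' i)
    (h1 : ∑ i, r i = 1) (h1' : ∑ i, r' i = 1)
    (hratio : ∀ k (hk : k + 1 < n),
      r' ⟨k, by omega⟩ * r ⟨k+1, hk⟩ ≤ r ⟨k, by omega⟩ * r' ⟨k+1, hk⟩)
    (S : Finset (Fin n)) (hS : ∀ i j : Fin n, (i:ℕ) ≤ (j:ℕ) → i ∈ S → j ∈ S) :
    ∑ j ∈ S, r j ≤ ∑ j ∈ S, r' j := by
  set f : Fin n → ℝ := fun i => r' i / r i with hf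
  have hfadj : ∀ k (hk : k + 1 < n), f ⟨k, by omega⟩ ≤ f ⟨k+1, hk⟩ := by
    intro k hk
    rw [hf]
    rw [div_le_div_iff₀ (hr _) (hr _)]
    have := hratio k hk
    nlinarith [hr (⟨k, by omega⟩ : Fin n), hr (⟨k+1, hk⟩ : Fin n)]
  have hfstep : ∀ d, ∀ i : Fin n, ∀ (h : (i:ℕ) + d < n), f i ≤ f ⟨(i:ℕ) + d, h⟩ := by
    intro d
    induction d with
    | zero => intro i h; simp
    | succ m ih =>
      intro i h
      refine le_trans (ih i (by omega)) ?_
      have := hfadj ((i:ℕ) + m) (by omega)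
      exact this
  have hfmono : ∀ i j : Fin n, (i:ℕ) ≤ (j:ℕ) → f i ≤ f j := by
    intro i j hij
    have := hfstep ((j:ℕ) - (i:ℕ)) i (by omega)
    have he : (⟨(i:ℕ) + ((j:ℕ) - (i:ℕ)), by omega⟩ : Fin n) = j := by
      apply Fin.ext; simp; omega
    rwa [he] at this
  have hrf : ∀ i, r' i = r i * f i := by
    intro i
    rw [hf, mul_comm]
    exact (div_mul_cancel₀ (r' i) (hr i).ne').symm
  by_cases hcase : ∀ j ∈ S, 1 ≤ f j
  · apply Finset.sum_le_sum
    intro j hj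
    rw [hrf j]
    nlinarith [hr j, hcase j hj]
  · push_neg at hcase
    obtain ⟨j0, hj0S, hj0⟩ := hcase
    have hout : ∀ j : Fin n, j ∉ S → f j ≤ f j0 := by
      intro j hjS
      rcases le_or_gt (j0:ℕ) (j:ℕ) with h | h
      · exact absurd (hS j0 j h hj0S) hjS
      · exact hfmono j j0 (by omega)
    have hcompl : ∑ j ∈ Sᶜ, r' j ≤ ∑ j ∈ Sᶜ, r j := by
      apply Finset.sum_le_sum
      intro j hj
      rw [Finset.mem_compl] at hj
      rw [hrf j]
      nlinarith [hr j, hout j hj, hj0]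
    have e1 : ∑ j ∈ S, r j + ∑ j ∈ Sᶜ, r j = 1 := by
      rw [Finset.sum_add_sum_compl]; exact h1
    have e2 : ∑ j ∈ S, r' j + ∑ j ∈ Sᶜ, r' j = 1 := by
      rw [Finset.sum_add_sum_compl]; exact h1'
    linarith

end MLR
section Rho
variable {n : ℕ}

/-- Unnormalized stationary weights of a tridiagonal kernel via detailed balance. -/
noncomputable def rhoAux (n : ℕ) (T : Fin n → Fin n → ℝ) : ℕ → ℝ
  | 0 => 1
  | k+1 => if h : k + 1 < n then
      rhoAux n T k * T ⟨k+1, h⟩ ⟨k, by omega⟩ / T ⟨k, by omega⟩ ⟨k+1, h⟩ else 0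

lemma rhoAux_pos (T : Fin n → Fin n → ℝ)
    (hpos : ∀ j i : Fin n, (j:ℕ) ≤ (i:ℕ)+1 → (i:ℕ) ≤ (j:ℕ)+1 → 0 < T j i) :
    ∀ k, k < n → 0 < rhoAux n T k := by
  intro k
  induction k with
  | zero => intro _; simp [rhoAux]
  | succ m ih =>
    intro h
    rw [rhoAux, dif_pos h]
    exact div_pos (mul_pos (ih (by omega)) (hpos _ _ (by simp only [Fin.val_mk]; omega) (by simp only [Fin.val_mk]; omega)))
      (hpos _ _ (by simp only [Fin.val_mk]; omega) (by simp only [Fin.val_mk]; omega))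

lemma rhoAux_db (T : Fin n → Fin n → ℝ)
    (hpos : ∀ j i : Fin n, (j:ℕ) ≤ (i:ℕ)+1 → (i:ℕ) ≤ (j:ℕ)+1 → 0 < T j i)
    (k : ℕ) (hk : k + 1 < n) :
    rhoAux n T k * T ⟨k+1, hk⟩ ⟨k, by omega⟩
      = rhoAux n T (k+1) * T ⟨k, by omega⟩ ⟨k+1, hk⟩ := by
  rw [rhoAux, dif_pos hk, div_mul_cancel₀]
  exact (hpos _ _ (by simp only [Fin.val_mk]; omega) (by simp only [Fin.val_mk]; omega)).ne'

end Rho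

section Opt
variable {n : ℕ}

lemma sum_mul_update (f w : Fin n → ℝ) (i : Fin n) (b : ℝ) :
    ∑ x, w x * Function.update f i b x = (∑ x, w x * f x) + w i * (b - f i) := by
  have h : ∀ x : Fin n, w x * Function.update f i b x
      = w x * f x + (if x = i then w i * (b - f i) else 0) := by
    intro x
    rcases eq_or_ne x i with rfl | hx
    · rw [Function.update_self, if_pos rfl]; ring
    · rw [Function.update_of_ne hx, if_neg hx]; ring
  simp only [h]
  rw [Finset.sum_add_distrib, Finset.sum_ite_eq' univ i (fun _ => w i * (b - f i)),
    if_pos (Finset.mem_univ i)]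

lemma convex_comb_pos {a x y : ℝ} (ha0 : 0 ≤ a) (ha1 : a ≤ 1) (hx : 0 < x) (hy : 0 < y) :
    0 < a * x + (1 - a) * y := by
  rcases eq_or_lt_of_le ha0 with h | h
  · rw [← h]; simpa using hy
  · have : 0 ≤ (1 - a) * y := mul_nonneg (by linarith) hy.le
    nlinarith

end Opt
section Pol
variable {n : ℕ}

/-- Kernel induced by a selection policy. -/
noncomputable def polK (q : Fin n → Fin n → Bool → ℝ) (p : Fin n → ℝ) :
    Fin n → Fin n → ℝ :=
  fun j i => p i * q j i true + (1 - p i) * q j i false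

variable (q : Fin n → Fin n → Bool → ℝ)
  (hq0 : ∀ j i d, 0 ≤ q j i d) (hq1 : ∀ i d, (∑ j, q j i d) = 1)
  (hband : ∀ j i : Fin n, ∀ d : Bool, (0 < q j i d ↔ |(i : ℤ) - (j : ℤ)| ≤ 1))

include hq0 hband in
lemma qzero : ∀ j i : Fin n, ∀ d, (j:ℕ)+1 < (i:ℕ) ∨ (i:ℕ)+1 < (j:ℕ) → q j i d = 0 := by
  intro j i d h
  have : ¬ (0 < q j i d) := by
    rw [hband]
    rw [abs_le]
    push_neg
    intro h1
    omega
  linarith [hq0 j i d]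

include hq0 hband in
lemma qpos : ∀ j i : Fin n, ∀ d, (j:ℕ) ≤ (i:ℕ)+1 → (i:ℕ) ≤ (j:ℕ)+1 → 0 < q j i d := by
  intro j i d h1 h2
  rw [hband, abs_le]
  constructor <;> omega

include hq0 hband in
lemma polK_zero (p : Fin n → ℝ) :
    ∀ j i : Fin n, (j:ℕ)+1 < (i:ℕ) ∨ (i:ℕ)+1 < (j:ℕ) → polK q p j i = 0 := by
  intro j i h
  unfold polK
  rw [qzero q hq0 hband j i true h, qzero q hq0 hband j i false h]
  ring

include hq1 in
lemma polK_row (p : Fin n → ℝ) : ∀ i, ∑ j, polK q p j i = 1 := by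
  intro i
  unfold polK
  rw [Finset.sum_add_distrib, ← Finset.mul_sum, ← Finset.mul_sum, hq1 i true, hq1 i false]
  ring

include hq0 hband in
lemma polK_pos (p : Fin n → ℝ) (hp : ∀ i, 0 ≤ p i ∧ p i ≤ 1) :
    ∀ j i : Fin n, (j:ℕ) ≤ (i:ℕ)+1 → (i:ℕ) ≤ (j:ℕ)+1 → 0 < polK q p j i :=
  fun j i h1 h2 => convex_comb_pos (hp i).1 (hp i).2
    (qpos q hq0 hband j i true h1 h2) (qpos q hq0 hband j i false h1 h2)

include hq0 hq1 hband in
lemma polK_nonneg (p : Fin n → ℝ) (hp : ∀ i, 0 ≤ p i ∧ p i ≤ 1) :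
    ∀ j i : Fin n, 0 ≤ polK q p j i := by
  intro j i
  unfold polK
  have h1 := hq0 j i true
  have h2 := hq0 j i false
  have := (hp i).1; have := (hp i).2
  nlinarith

include hq0 hq1 hband in
/-- Tail comparison: pointwise larger policy gives stochastically larger
stationary distribution. -/
lemma tail_compare
    (hhelp : ∀ i j : Fin n, (j : ℕ) = (i : ℕ) + 1 →
      q j i false ≤ q j i true ∧ q i j true ≤ q i j false)
    (pA pB : Fin n → ℝ) (hpA : ∀ i, 0 ≤ pA i ∧ pA i ≤ 1) (hpB : ∀ i, 0 ≤ pB i ∧ pB i ≤ 1)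
    (hle : ∀ i, pA i ≤ pB i)
    (rA rB : Fin n → ℝ) (hrA : ∀ i, 0 < rA i) (hrB : ∀ i, 0 < rB i)
    (h1A : ∑ i, rA i = 1) (h1B : ∑ i, rB i = 1)
    (hstA : ∀ j, ∑ i, rA i * polK q pA j i = rA j)
    (hstB : ∀ j, ∑ i, rB i * polK q pB j i = rB j)
    (S : Finset (Fin n)) (hS : ∀ i j : Fin n, (i:ℕ) ≤ (j:ℕ) → i ∈ S → j ∈ S) :
    ∑ j ∈ S, rA j ≤ ∑ j ∈ S, rB j := by
  apply mlr_tail rA rB hrA hrB h1A h1B _ S hS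
  intro k hk
  have hAdb := stationary_db (polK q pA) (polK_zero q hq0 hband pA) (polK_row q hq1 pA)
    rA hstA k hk
  have hBdb := stationary_db (polK q pB) (polK_zero q hq0 hband pB) (polK_row q hq1 pB)
    rB hstB k hk
  obtain ⟨i, hi⟩ : ∃ i : Fin n, (i:ℕ) = k := ⟨⟨k, by omega⟩, rfl⟩
  obtain ⟨j, hj⟩ : ∃ j : Fin n, (j:ℕ) = k+1 := ⟨⟨k+1, hk⟩, rfl⟩
  have ei : (⟨k, by omega⟩ : Fin n) = i := Fin.ext (by simp [hi])
  have ej : (⟨k+1, hk⟩ : Fin n) = j := Fin.ext (by simp [hj])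
  rw [ei, ej] at hAdb hBdb ⊢
  have hji : (j:ℕ) = (i:ℕ) + 1 := by omega
  have hup : polK q pA j i ≤ polK q pB j i := by
    unfold polK
    have h := (hhelp i j hji).1
    have := hle i
    nlinarith
  have hdown : polK q pB i j ≤ polK q pA i j := by
    unfold polK
    have h := (hhelp i j hji).2
    have := hle j
    nlinarith
  have hposAu : 0 < polK q pA j i := polK_pos q hq0 hband pA hpA j i (by omega) (by omega)
  have hposAd : 0 < polK q pA i j := polK_pos q hq0 hband pA hpA i j (by omega) (by omega)
  have hposBu : 0 < polK q pB j i := polK_pos q hq0 hband pB hpB j i (by omega) (by omega)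
  have hposBd : 0 < polK q pB i j := polK_pos q hq0 hband pB hpB i j (by omega) (by omega)
  have hAi := hrA i; have hAj := hrA j; have hBi := hrB i; have hBj := hrB j
  have key : polK q pA j i * polK q pB i j ≤ polK q pB j i * polK q pA i j := by
    nlinarith
  have l1 : rB i * rA j * (polK q pA i j * polK q pB i j)
      = (rA i * rB i) * (polK q pA j i * polK q pB i j) := by
    linear_combination (-(rB i * polK q pB i j)) * hAdb
  have l2 : rA i * rB j * (polK q pA i j * polK q pB i j)
      = (rA i * rB i) * (polK q pB j i * polK q pA i j) := by
    linear_combination (-(rA i * polK q pA i j)) * hBdb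
  have hm : (rA i * rB i) * (polK q pA j i * polK q pB i j)
      ≤ (rA i * rB i) * (polK q pB j i * polK q pA i j) :=
    mul_le_mul_of_nonneg_left key (by positivity)
  exact le_of_mul_le_mul_right (by rw [l1, l2]; exact hm) (by positivity)

end Pol

section OptLemmas
variable {n : ℕ}

lemma sum3_update (a b f : Fin n → ℝ) (i : Fin n) (v : ℝ) :
    ∑ x, a x * b x * Function.update f i v x
      = (∑ x, a x * b x * f x) + a i * b i * (v - f i) := by
  have h : ∀ x : Fin n, a x * b x * Function.update f i v x
      = a x * b x * f x + (if x = i then a i * b i * (v - f i) else 0) := by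
    intro x
    rcases eq_or_ne x i with rfl | hx
    · rw [Function.update_self, if_pos rfl]; ring
    · rw [Function.update_of_ne hx, if_neg hx]; ring
  simp only [h]
  rw [Finset.sum_add_distrib, Finset.sum_ite_eq' univ i (fun _ => a i * b i * (v - f i)),
    if_pos (Finset.mem_univ i)]

lemma sum3_update2 (a b f : Fin n → ℝ) (i j : Fin n) (hij : j ≠ i) (v w : ℝ) :
    ∑ x, a x * b x * Function.update (Function.update f i v) j w x
      = (∑ x, a x * b x * f x) + a i * b i * (v - f i) + a j * b j * (w - f j) := by
  rw [sum3_update a b _ j w, sum3_update a b f i v, Function.update_of_ne hij]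

lemma sum_update2 (a f : Fin n → ℝ) (i j : Fin n) (hij : j ≠ i) (v w : ℝ) :
    ∑ x, a x * Function.update (Function.update f i v) j w x
      = (∑ x, a x * f x) + a i * (v - f i) + a j * (w - f j) := by
  rw [sum_mul_update _ a j w, sum_mul_update f a i v, Function.update_of_ne hij]

lemma update_adm (f : Fin n → ℝ) (hf : ∀ x, 0 ≤ f x ∧ f x ≤ 1) (i : Fin n) (v : ℝ)
    (hv : 0 ≤ v ∧ v ≤ 1) : ∀ x, 0 ≤ Function.update f i v x ∧ Function.update f i v x ≤ 1 := by
  intro x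
  rcases eq_or_ne x i with rfl | h
  · simpa [Function.update_self] using hv
  · rw [Function.update_of_ne h]; exact hf x

lemma improve_contra (yv : Fin n → ℝ) (wA wB : ℝ) (rA rB : Fin n → ℝ) (g : ℝ → ℝ) (lam : ℝ)
    (π π' : Bool → Fin n → ℝ)
    (hopt : ∀ π'', AdmF π'' → dObjF yv wA wB rA rB g lam π'' ≤ dObjF yv wA wB rA rB g lam π)
    (hadm' : AdmF π') (hgmono : MonotoneOn g (Set.Ici 0)) (hlam : 0 ≤ lam)
    (hU : (wA * ∑ i, rA i * yv i * π true i + wB * ∑ i, rB i * yv i * π false i) <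
          (wA * ∑ i, rA i * yv i * π' true i + wB * ∑ i, rB i * yv i * π' false i))
    (hD : |(∑ i, rA i * π' true i) - ∑ i, rB i * π' false i| ≤
          |(∑ i, rA i * π true i) - ∑ i, rB i * π false i|) : False := by
  have h := hopt π' hadm'
  unfold dObjF at h
  have hgle := hgmono (Set.mem_Ici.2 (abs_nonneg _)) (Set.mem_Ici.2 (abs_nonneg _)) hD
  have hmul : lam * g (|(∑ i, rA i * π' true i) - ∑ i, rB i * π' false i|)
      ≤ lam * g (|(∑ i, rA i * π true i) - ∑ i, rB i * π false i|) :=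
    mul_le_mul_of_nonneg_left hgle hlam
  linarith

/-- Cross-group two-point perturbation. -/
lemma pert_cross (yv : Fin n → ℝ) (wA wB : ℝ) (rA rB : Fin n → ℝ) (g : ℝ → ℝ) (lam : ℝ)
    (π : Bool → Fin n → ℝ)
    (hopt : ∀ π'', AdmF π'' → dObjF yv wA wB rA rB g lam π'' ≤ dObjF yv wA wB rA rB g lam π)
    (hadm : AdmF π) (hgmono : MonotoneOn g (Set.Ici 0)) (hlam : 0 ≤ lam)
    (i j : Fin n) (eA eB : ℝ)
    (hbA : 0 ≤ π true i + eA ∧ π true i + eA ≤ 1)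
    (hbB : 0 ≤ π false j + eB ∧ π false j + eB ≤ 1)
    (hU : 0 < wA * (rA i * yv i * eA) + wB * (rB j * yv j * eB))
    (hD : |((∑ x, rA x * π true x) + rA i * eA) - ((∑ x, rB x * π false x) + rB j * eB)| ≤
          |(∑ x, rA x * π true x) - ∑ x, rB x * π false x|) : False := by
  set π' : Bool → Fin n → ℝ := fun c => match c with
    | true => Function.update (π true) i (π true i + eA)
    | false => Function.update (π false) j (π false j + eB) with hπ'
  have hπt : π' true = Function.update (π true) i (π true i + eA) := rfl
  have hπf : π' false = Function.update (π false) j (π false j + eB) := rfl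
  have hadm' : AdmF π' := by
    intro c x
    cases c
    · rw [hπf]; exact update_adm (π false) (fun x => hadm false x) j _ hbB x
    · rw [hπt]; exact update_adm (π true) (fun x => hadm true x) i _ hbA x
  have e1 : ∑ x, rA x * yv x * π' true x
      = (∑ x, rA x * yv x * π true x) + rA i * yv i * eA := by
    rw [hπt, sum3_update]; ring
  have e2 : ∑ x, rB x * yv x * π' false x
      = (∑ x, rB x * yv x * π false x) + rB j * yv j * eB := by
    rw [hπf, sum3_update]; ring
  have e3 : ∑ x, rA x * π' true x = (∑ x, rA x * π true x) + rA i * eA := by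
    rw [hπt, sum_mul_update]; ring
  have e4 : ∑ x, rB x * π' false x = (∑ x, rB x * π false x) + rB j * eB := by
    rw [hπf, sum_mul_update]; ring
  apply improve_contra yv wA wB rA rB g lam π π' hopt hadm' hgmono hlam
  · rw [e1, e2]; nlinarith [hU]
  · rw [e3, e4]; exact hD

/-- Same-group (A) two-point perturbation keeping the selection rate constant. -/
lemma pert_sameA (yv : Fin n → ℝ) (wA wB : ℝ) (rA rB : Fin n → ℝ) (g : ℝ → ℝ) (lam : ℝ)
    (π : Bool → Fin n → ℝ)
    (hopt : ∀ π'', AdmF π'' → dObjF yv wA wB rA rB g lam π'' ≤ dObjF yv wA wB rA rB g lam π)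
    (hadm : AdmF π) (hgmono : MonotoneOn g (Set.Ici 0)) (hlam : 0 ≤ lam)
    (i j : Fin n) (hij : j ≠ i) (e1 e2 : ℝ)
    (hb1 : 0 ≤ π true i + e1 ∧ π true i + e1 ≤ 1)
    (hb2 : 0 ≤ π true j + e2 ∧ π true j + e2 ≤ 1)
    (hU : 0 < wA * (rA i * yv i * e1 + rA j * yv j * e2))
    (hD : rA i * e1 + rA j * e2 = 0) : False := by
  set π' : Bool → Fin n → ℝ := fun c => match c with
    | true => Function.update (Function.update (π true) i (π true i + e1)) j (π true j + e2)
    | false => π false with hπ'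
  have hπt : π' true
      = Function.update (Function.update (π true) i (π true i + e1)) j (π true j + e2) := rfl
  have hπf : π' false = π false := rfl
  have hadm' : AdmF π' := by
    intro c x
    cases c
    · rw [hπf]; exact hadm false x
    · rw [hπt]
      refine update_adm _ ?_ j _ ?_ x
      · exact update_adm (π true) (fun x => hadm true x) i _ hb1
      · exact hb2
  have ha : ∑ x, rA x * yv x * π' true x
      = (∑ x, rA x * yv x * π true x) + rA i * yv i * e1 + rA j * yv j * e2 := by
    rw [hπt, sum3_update2 _ _ _ _ _ hij]; ring
  have hb : ∑ x, rA x * π' true x = (∑ x, rA x * π true x) + rA i * e1 + rA j * e2 := by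
    rw [hπt, sum_update2 _ _ _ _ hij]; ring
  apply improve_contra yv wA wB rA rB g lam π π' hopt hadm' hgmono hlam
  · rw [ha, hπf]; nlinarith [hU]
  · rw [hb, hπf]
    have he : (∑ x, rA x * π true x) + rA i * e1 + rA j * e2 = ∑ x, rA x * π true x := by
      linarith [hD]
    rw [he]

/-- Same-group (B) two-point perturbation keeping the selection rate constant. -/
lemma pert_sameB (yv : Fin n → ℝ) (wA wB : ℝ) (rA rB : Fin n → ℝ) (g : ℝ → ℝ) (lam : ℝ)
    (π : Bool → Fin n → ℝ)
    (hopt : ∀ π'', AdmF π'' → dObjF yv wA wB rA rB g lam π'' ≤ dObjF yv wA wB rA rB g lam π)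
    (hadm : AdmF π) (hgmono : MonotoneOn g (Set.Ici 0)) (hlam : 0 ≤ lam)
    (i j : Fin n) (hij : j ≠ i) (e1 e2 : ℝ)
    (hb1 : 0 ≤ π false i + e1 ∧ π false i + e1 ≤ 1)
    (hb2 : 0 ≤ π false j + e2 ∧ π false j + e2 ≤ 1)
    (hU : 0 < wB * (rB i * yv i * e1 + rB j * yv j * e2))
    (hD : rB i * e1 + rB j * e2 = 0) : False := by
  set π' : Bool → Fin n → ℝ := fun c => match c with
    | false => Function.update (Function.update (π false) i (π false i + e1)) j (π false j + e2)
    | true => π true with hπ'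
  have hπf : π' false
      = Function.update (Function.update (π false) i (π false i + e1)) j (π false j + e2) := rfl
  have hπt : π' true = π true := rfl
  have hadm' : AdmF π' := by
    intro c x
    cases c
    · rw [hπf]
      refine update_adm _ ?_ j _ ?_ x
      · exact update_adm (π false) (fun x => hadm false x) i _ hb1
      · exact hb2
    · rw [hπt]; exact hadm true x
  have ha : ∑ x, rB x * yv x * π' false x
      = (∑ x, rB x * yv x * π false x) + rB i * yv i * e1 + rB j * yv j * e2 := by
    rw [hπf, sum3_update2 _ _ _ _ _ hij]; ring
  have hb : ∑ x, rB x * π' false x = (∑ x, rB x * π false x) + rB i * e1 + rB j * e2 := by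
    rw [hπf, sum_update2 _ _ _ _ hij]; ring
  apply improve_contra yv wA wB rA rB g lam π π' hopt hadm' hgmono hlam
  · rw [ha, hπt]; nlinarith [hU]
  · rw [hb, hπt]
    have he : (∑ x, rB x * π false x) + rB i * e1 + rB j * e2 = ∑ x, rB x * π false x := by
      linarith [hD]
    rw [he]

end OptLemmas


set_option maxHeartbeats 1600000 in
/-- Unique stationary state for slowly-changing qualifications.
Under the birth–death support assumption and the assumption that selection helps,
the myopic dynamics has a unique stationary state; in it both groups share the unique
stationary distribution of the kernel `T(y'|y) = q(y'|y, 1[y>0])`. -/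
theorem stmt_15 (n : ℕ) (hn : 0 < n) (yv : Fin n → ℝ)
    (hmono : StrictMono yv) (hnz : ∀ i, yv i ≠ 0)
    (q : Fin n → Fin n → Bool → ℝ)
    (hq0 : ∀ j i d, 0 ≤ q j i d) (hq1 : ∀ i d, (∑ j, q j i d) = 1)
    (hband : ∀ j i : Fin n, ∀ d : Bool, (0 < q j i d ↔ |(i : ℤ) - (j : ℤ)| ≤ 1))
    (hhelp : ∀ i j : Fin n, (j : ℕ) = (i : ℕ) + 1 →
      q j i false ≤ q j i true ∧ q i j true ≤ q i j false)
    (wA wB : ℝ) (hwA : 0 < wA) (hwB : 0 < wB) (hw : wA + wB = 1)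
    (g : ℝ → ℝ)
    (hg : g 0 = 0 ∧ MonotoneOn g (Set.Ici 0) ∧ ConvexOn ℝ (Set.Ici 0) g ∧
      ∀ x ∈ Set.Ici (0 : ℝ), 0 ≤ g x)
    (lam : ℝ) (hlam : 0 ≤ lam) :
    ∃ r : Fin n → ℝ,
      (IsDistF r ∧
        ∀ j, r j = ∑ i, r i * (if 0 < yv i then q j i true else q j i false)) ∧
      (∀ r', IsDistF r' →
        (∀ j, r' j = ∑ i, r' i * (if 0 < yv i then q j i true else q j i false)) →
        r' = r) ∧
      (∃ π, StatStateF yv q wA wB g lam r r π) ∧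
      (∀ rA rB π, IsDistF rA → IsDistF rB →
        StatStateF yv q wA wB g lam rA rB π → rA = r ∧ rB = r) := by
  classical
  set T : Fin n → Fin n → ℝ := fun j i => if 0 < yv i then q j i true else q j i false with hT
  have hTapp : ∀ j i : Fin n, T j i = if 0 < yv i then q j i true else q j i false := by
    intro j i; rw [hT]
  have hTz : ∀ j i : Fin n, (j:ℕ)+1 < (i:ℕ) ∨ (i:ℕ)+1 < (j:ℕ) → T j i = 0 := by
    intro j i h
    rw [hTapp]
    split_ifs <;> exact qzero q hq0 hband j i _ h
  have hTrow : ∀ i, ∑ j, T j i = 1 := by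
    intro i
    have : ∀ j : Fin n, T j i = if 0 < yv i then q j i true else q j i false := fun j => hTapp j i
    simp only [this]
    split_ifs <;> exact hq1 i _
  have hTpos : ∀ j i : Fin n, (j:ℕ) ≤ (i:ℕ)+1 → (i:ℕ) ≤ (j:ℕ)+1 → 0 < T j i := by
    intro j i h1 h2
    rw [hTapp]
    split_ifs <;> exact qpos q hq0 hband j i _ h1 h2
  have hNe : Nonempty (Fin n) := ⟨⟨0, hn⟩⟩
  set Z : ℝ := ∑ i : Fin n, rhoAux n T (i:ℕ) with hZdef
  have hZpos : 0 < Z := by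
    rw [hZdef]
    refine Finset.sum_pos (fun i _ => ?_) Finset.univ_nonempty
    exact rhoAux_pos T hTpos (i:ℕ) i.isLt
  set r : Fin n → ℝ := fun i => rhoAux n T (i:ℕ) / Z with hrdef
  have hrapp : ∀ i : Fin n, r i = rhoAux n T (i:ℕ) / Z := fun i => by rw [hrdef]
  have hrpos : ∀ i, 0 < r i := fun i => by
    rw [hrapp]; exact div_pos (rhoAux_pos T hTpos _ i.isLt) hZpos
  have hrsum : ∑ i, r i = 1 := by
    simp only [hrapp]
    rw [← Finset.sum_div, ← hZdef]
    exact div_self hZpos.ne'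
  have hrdb : ∀ (k : ℕ) (hk : k+1 < n), r ⟨k, by omega⟩ * T ⟨k+1, hk⟩ ⟨k, by omega⟩
      = r ⟨k+1, hk⟩ * T ⟨k, by omega⟩ ⟨k+1, hk⟩ := by
    intro k hk
    have h := rhoAux_db T hTpos k hk
    rw [hrapp, hrapp]
    simp only [Fin.val_mk]
    rw [div_mul_eq_mul_div, div_mul_eq_mul_div, h]
  have hrstat : ∀ j, ∑ i, r i * T j i = r j := db_stationary T hTz hTrow r hrdb
  have huniq : ∀ r', IsDistF r' → (∀ j, ∑ i, r' i * T j i = r' j) → r' = r := by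
    intro r' hd hst
    have hdb' := fun k hk => stationary_db T hTz hTrow r' hst k hk
    have hval : ∀ k (hk : k < n), r' ⟨k, hk⟩ = r' ⟨0, hn⟩ * rhoAux n T k := by
      intro k
      induction k with
      | zero => intro hk; rw [rhoAux, mul_one]
      | succ m ih =>
        intro hk
        have hdb := hdb' m hk
        have hd0 : 0 < T ⟨m, by omega⟩ ⟨m+1, hk⟩ :=
          hTpos _ _ (by simp only [Fin.val_mk]; omega) (by simp only [Fin.val_mk]; omega)
        have hstep : r' ⟨m+1, hk⟩
            = r' ⟨m, by omega⟩ * T ⟨m+1, hk⟩ ⟨m, by omega⟩ / T ⟨m, by omega⟩ ⟨m+1, hk⟩ := by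
          rw [eq_div_iff hd0.ne']
          linear_combination -hdb
        rw [hstep, ih (by omega), rhoAux, dif_pos hk]
        ring
    have hfor : ∀ i : Fin n, r' i = r' ⟨0, hn⟩ * rhoAux n T (i:ℕ) := by
      intro i
      have h := hval (i:ℕ) i.isLt
      rwa [show (⟨(i:ℕ), i.isLt⟩ : Fin n) = i from Fin.ext rfl] at h
    have hZ1 : r' ⟨0, hn⟩ * Z = 1 := by
      have h2 : ∑ i, r' i = r' ⟨0, hn⟩ * Z := by
        rw [hZdef, Finset.mul_sum]
        exact Finset.sum_congr rfl (fun i _ => hfor i)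
      rw [← h2]; exact hd.2
    funext i
    rw [hfor i, hrapp, eq_div_iff hZpos.ne']
    linear_combination rhoAux n T (i:ℕ) * hZ1
  have hgm := hg.2.1
  have hgnn := hg.2.2.2
  refine ⟨r, ⟨⟨fun i => (hrpos i).le, hrsum⟩, ?_⟩, ?_, ?_, ?_⟩
  · -- stationarity of r, in the statement's form
    intro j
    have h := hrstat j
    simp only [hTapp] at h
    exact h.symm
  · -- uniqueness of the stationary distribution
    intro r' hd hst
    apply huniq r' hd
    intro j
    have h := (hst j).symm
    simp only [hTapp]
    exact h
  · -- existence of a stationary state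
    refine ⟨fun _ i => if 0 < yv i then (1:ℝ) else 0, ?_, ?_, ?_, ?_⟩
    · intro c i; dsimp only; split_ifs <;> norm_num
    · intro π' hπ'
      unfold dObjF
      have hub : ∀ (p : Fin n → ℝ), (∀ x, 0 ≤ p x ∧ p x ≤ 1) →
          ∑ i, r i * yv i * p i ≤ ∑ i, r i * yv i * (if 0 < yv i then (1:ℝ) else 0) := by
        intro p hp
        apply Finset.sum_le_sum
        intro x _
        rcases lt_trichotomy (yv x) 0 with h | h | h
        · rw [if_neg (by linarith)]
          have hry : r x * yv x < 0 := mul_neg_of_pos_of_neg (hrpos x) h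
          nlinarith [mul_nonneg (neg_nonneg.mpr hry.le) (hp x).1]
        · exact absurd h (hnz x)
        · rw [if_pos h]
          have hry : 0 < r x * yv x := mul_pos (hrpos x) h
          nlinarith [mul_nonneg hry.le (sub_nonneg.mpr (hp x).2)]
      have hpen' : 0 ≤ lam * g (|(∑ i, r i * π' true i) - ∑ i, r i * π' false i|) :=
        mul_nonneg hlam (hgnn _ (Set.mem_Ici.2 (abs_nonneg _)))
      have hpen0 : (∑ i, r i * (if 0 < yv i then (1:ℝ) else 0))
          - (∑ i, r i * (if 0 < yv i then (1:ℝ) else 0)) = 0 := by ring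
      rw [hpen0, abs_zero, hg.1, mul_zero]
      have h1 := mul_le_mul_of_nonneg_left (hub (π' true) (fun x => hπ' true x)) hwA.le
      have h2 := mul_le_mul_of_nonneg_left (hub (π' false) (fun x => hπ' false x)) hwB.le
      linarith
    · intro j
      show stepF q r _ j = r j
      unfold stepF
      rw [← hrstat j]
      apply Finset.sum_congr rfl
      intro x _
      rw [hTapp]
      by_cases h : 0 < yv x <;> simp [h] <;> ring
    · intro j
      show stepF q r _ j = r j
      unfold stepF
      rw [← hrstat j]
      apply Finset.sum_congr rfl
      intro x _
      rw [hTapp]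
      by_cases h : 0 < yv x <;> simp [h] <;> ring
  · -- uniqueness of stationary states
    intro rA rB π hdA hdB hss
    obtain ⟨hadm, hopt, hfixA, hfixB⟩ := hss
    have hstA : ∀ j, ∑ i, rA i * polK q (π true) j i = rA j := by
      intro j
      have h := hfixA j
      unfold stepF at h
      unfold polK
      exact h
    have hstB : ∀ j, ∑ i, rB i * polK q (π false) j i = rB j := by
      intro j
      have h := hfixB j
      unfold stepF at h
      unfold polK
      exact h
    have hposA : ∀ i, 0 < rA i :=
      stationary_pos (polK q (π true))
        (polK_nonneg q hq0 hq1 hband (π true) (fun x => hadm true x))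
        (polK_pos q hq0 hband (π true) (fun x => hadm true x)) rA hdA.1 hdA.2 hstA
    have hposB : ∀ i, 0 < rB i :=
      stationary_pos (polK q (π false))
        (polK_nonneg q hq0 hq1 hband (π false) (fun x => hadm false x))
        (polK_pos q hq0 hband (π false) (fun x => hadm false x)) rB hdB.1 hdB.2 hstB
    set tau : Fin n → ℝ := fun i => if 0 < yv i then 1 else 0 with htau
    have htauapp : ∀ i, tau i = if 0 < yv i then (1:ℝ) else 0 := fun i => by rw [htau]
    set S : Finset (Fin n) := univ.filter (fun i => 0 < yv i) with hSdef
    have hSup : ∀ i j : Fin n, (i:ℕ) ≤ (j:ℕ) → i ∈ S → j ∈ S := by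
      intro i j hij hi
      rw [hSdef, Finset.mem_filter] at *
      refine ⟨Finset.mem_univ _, ?_⟩
      have hle : yv i ≤ yv j := hmono.monotone (Fin.le_def.mpr hij)
      exact lt_of_lt_of_le hi.2 hle
    have htau_sum : ∀ rc : Fin n → ℝ, ∑ x, rc x * tau x = ∑ j ∈ S, rc j := by
      intro rc
      rw [hSdef, Finset.sum_filter]
      apply Finset.sum_congr rfl
      intro x _
      rw [htauapp]
      split_ifs <;> ring
    have hcompare : (∀ x, π true x ≤ π false x) → ∑ j ∈ S, rA j ≤ ∑ j ∈ S, rB j :=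
      fun hle => tail_compare q hq0 hq1 hband hhelp (π true) (π false)
        (fun x => hadm true x) (fun x => hadm false x) hle rA rB hposA hposB
        hdA.2 hdB.2 hstA hstB S hSup
    have hcompare' : (∀ x, π false x ≤ π true x) → ∑ j ∈ S, rB j ≤ ∑ j ∈ S, rA j :=
      fun hle => tail_compare q hq0 hq1 hband hhelp (π false) (π true)
        (fun x => hadm false x) (fun x => hadm true x) hle rB rA hposB hposA
        hdB.2 hdA.2 hstB hstA S hSup
    have hub1 : ∀ (rc pc : Fin n → ℝ), (∀ x, 0 < rc x) → (∀ x, pc x ≤ tau x) →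
        ∑ x, rc x * pc x ≤ ∑ x, rc x * tau x :=
      fun rc pc h0 hle => Finset.sum_le_sum
        (fun x _ => mul_le_mul_of_nonneg_left (hle x) (h0 x).le)
    have hub2 : ∀ (rc pc : Fin n → ℝ), (∀ x, 0 < rc x) → (∀ x, tau x ≤ pc x) →
        ∑ x, rc x * tau x ≤ ∑ x, rc x * pc x :=
      fun rc pc h0 hle => Finset.sum_le_sum
        (fun x _ => mul_le_mul_of_nonneg_left (hle x) (h0 x).le)
    -- Step 1: equal selection rates
    have hsEq : ∑ x, rA x * π true x = ∑ x, rB x * π false x := by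
      rcases lt_trichotomy (∑ x, rA x * π true x) (∑ x, rB x * π false x) with hlt | heq | hgt
      · -- sB > sA : B must not select negatives, A must select positives
        exfalso
        have hNBv : ∀ i, yv i < 0 → π false i = 0 := by
          intro i hyi
          by_contra hne
          have hp : 0 < π false i := lt_of_le_of_ne (hadm false i).1 (Ne.symm hne)
          have hεpos : 0 < min (π false i) ((∑ x, rB x * π false x - ∑ x, rA x * π true x) / rB i) :=
            lt_min hp (div_pos (by linarith) (hposB i))
          set ε := min (π false i) ((∑ x, rB x * π false x - ∑ x, rA x * π true x) / rB i) with hεdef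
          apply pert_cross yv wA wB rA rB g lam π hopt hadm hgm hlam i i 0 (-ε)
          · have h := hadm true i; constructor <;> linarith [h.1, h.2]
          · constructor
            · have := min_le_left (π false i) ((∑ x, rB x * π false x - ∑ x, rA x * π true x) / rB i)
              linarith
            · have := (hadm false i).2; linarith
          · have hterm : wB * (rB i * yv i * (-ε)) = wB * rB i * ε * (-yv i) := by ring
            have hpos' : 0 < wB * rB i * ε * (-yv i) := by
              apply mul_pos (mul_pos (mul_pos hwB (hposB i)) hεpos)
              linarith
            have hz : wA * (rA i * yv i * 0) = 0 := by ring
            linarith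
          · have h2 : ε ≤ (∑ x, rB x * π false x - ∑ x, rA x * π true x) / rB i := min_le_right _ _
            rw [le_div_iff₀ (hposB i)] at h2
            rw [mul_comm] at h2
            have hεnn : 0 ≤ rB i * ε := mul_nonneg (hposB i).le hεpos.le
            have he : (∑ x, rA x * π true x) + rA i * 0 - ((∑ x, rB x * π false x) + rB i * (-ε))
                = -(((∑ x, rB x * π false x) - ∑ x, rA x * π true x) - rB i * ε) := by ring
            rw [he, abs_neg, abs_of_nonneg (by linarith), abs_of_nonpos (by linarith), neg_sub]
            linarith
        have hPAv : ∀ i, 0 < yv i → π true i = 1 := by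
          intro i hyi
          by_contra hne
          have hp : π true i < 1 := lt_of_le_of_ne (hadm true i).2 hne
          have hεpos : 0 < min (1 - π true i) ((∑ x, rB x * π false x - ∑ x, rA x * π true x) / rA i) :=
            lt_min (by linarith) (div_pos (by linarith) (hposA i))
          set ε := min (1 - π true i) ((∑ x, rB x * π false x - ∑ x, rA x * π true x) / rA i) with hεdef
          apply pert_cross yv wA wB rA rB g lam π hopt hadm hgm hlam i i ε 0
          · constructor
            · have := (hadm true i).1; linarith
            · have := min_le_left (1 - π true i) ((∑ x, rB x * π false x - ∑ x, rA x * π true x) / rA i)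
              linarith
          · have h := hadm false i; constructor <;> linarith [h.1, h.2]
          · have hpos' : 0 < wA * (rA i * yv i * ε) :=
              mul_pos hwA (mul_pos (mul_pos (hposA i) hyi) hεpos)
            have hz : wB * (rB i * yv i * 0) = 0 := by ring
            linarith
          · have h2 : ε ≤ (∑ x, rB x * π false x - ∑ x, rA x * π true x) / rA i := min_le_right _ _
            rw [le_div_iff₀ (hposA i)] at h2
            rw [mul_comm] at h2
            have hεnn : 0 ≤ rA i * ε := mul_nonneg (hposA i).le hεpos.le
            have he : (∑ x, rA x * π true x) + rA i * ε - ((∑ x, rB x * π false x) + rB i * 0)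
                = -(((∑ x, rB x * π false x) - ∑ x, rA x * π true x) - rA i * ε) := by ring
            rw [he, abs_neg, abs_of_nonneg (by linarith), abs_of_nonpos (by linarith), neg_sub]
            linarith
        -- now π false ≤ tau ≤ π true
        have htB : ∀ x, π false x ≤ tau x := by
          intro x
          rw [htauapp]
          rcases lt_trichotomy (yv x) 0 with h | h | h
          · rw [if_neg (by linarith), hNBv x h]
          · exact absurd h (hnz x)
          · rw [if_pos h]; exact (hadm false x).2
        have htA : ∀ x, tau x ≤ π true x := by
          intro x
          rw [htauapp]
          rcases lt_trichotomy (yv x) 0 with h | h | h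
          · rw [if_neg (by linarith)]; exact (hadm true x).1
          · exact absurd h (hnz x)
          · rw [if_pos h, hPAv x h]
        have hle : ∀ x, π false x ≤ π true x := fun x => le_trans (htB x) (htA x)
        have c1 := hub1 rB (π false) hposB htB
        have c2 := htau_sum rB
        have c3 := hcompare' hle
        have c4 := htau_sum rA
        have c5 := hub2 rA (π true) hposA htA
        linarith
      · exact heq
      · -- sA > sB : symmetric
        exfalso
        have hNAv : ∀ i, yv i < 0 → π true i = 0 := by
          intro i hyi
          by_contra hne
          have hp : 0 < π true i := lt_of_le_of_ne (hadm true i).1 (Ne.symm hne)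
          have hεpos : 0 < min (π true i) ((∑ x, rA x * π true x - ∑ x, rB x * π false x) / rA i) :=
            lt_min hp (div_pos (by linarith) (hposA i))
          set ε := min (π true i) ((∑ x, rA x * π true x - ∑ x, rB x * π false x) / rA i) with hεdef
          apply pert_cross yv wA wB rA rB g lam π hopt hadm hgm hlam i i (-ε) 0
          · constructor
            · have := min_le_left (π true i) ((∑ x, rA x * π true x - ∑ x, rB x * π false x) / rA i)
              linarith
            · have := (hadm true i).2; linarith
          · have h := hadm false i; constructor <;> linarith [h.1, h.2]
          · have hterm : wA * (rA i * yv i * (-ε)) = wA * rA i * ε * (-yv i) := by ring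
            have hpos' : 0 < wA * rA i * ε * (-yv i) := by
              apply mul_pos (mul_pos (mul_pos hwA (hposA i)) hεpos)
              linarith
            have hz : wB * (rB i * yv i * 0) = 0 := by ring
            linarith
          · have h2 : ε ≤ (∑ x, rA x * π true x - ∑ x, rB x * π false x) / rA i := min_le_right _ _
            rw [le_div_iff₀ (hposA i)] at h2
            rw [mul_comm] at h2
            have hεnn : 0 ≤ rA i * ε := mul_nonneg (hposA i).le hεpos.le
            have he : (∑ x, rA x * π true x) + rA i * (-ε) - ((∑ x, rB x * π false x) + rB i * 0)
                = ((∑ x, rA x * π true x) - ∑ x, rB x * π false x) - rA i * ε := by ring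
            rw [he, abs_of_nonneg (by linarith), abs_of_nonneg (by linarith)]
            linarith
        have hPBv : ∀ i, 0 < yv i → π false i = 1 := by
          intro i hyi
          by_contra hne
          have hp : π false i < 1 := lt_of_le_of_ne (hadm false i).2 hne
          have hεpos : 0 < min (1 - π false i) ((∑ x, rA x * π true x - ∑ x, rB x * π false x) / rB i) :=
            lt_min (by linarith) (div_pos (by linarith) (hposB i))
          set ε := min (1 - π false i) ((∑ x, rA x * π true x - ∑ x, rB x * π false x) / rB i) with hεdef
          apply pert_cross yv wA wB rA rB g lam π hopt hadm hgm hlam i i 0 ε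
          · have h := hadm true i; constructor <;> linarith [h.1, h.2]
          · constructor
            · have := (hadm false i).1; linarith
            · have := min_le_left (1 - π false i) ((∑ x, rA x * π true x - ∑ x, rB x * π false x) / rB i)
              linarith
          · have hpos' : 0 < wB * (rB i * yv i * ε) :=
              mul_pos hwB (mul_pos (mul_pos (hposB i) hyi) hεpos)
            have hz : wA * (rA i * yv i * 0) = 0 := by ring
            linarith
          · have h2 : ε ≤ (∑ x, rA x * π true x - ∑ x, rB x * π false x) / rB i := min_le_right _ _
            rw [le_div_iff₀ (hposB i)] at h2
            rw [mul_comm] at h2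
            have hεnn : 0 ≤ rB i * ε := mul_nonneg (hposB i).le hεpos.le
            have he : (∑ x, rA x * π true x) + rA i * 0 - ((∑ x, rB x * π false x) + rB i * ε)
                = ((∑ x, rA x * π true x) - ∑ x, rB x * π false x) - rB i * ε := by ring
            rw [he, abs_of_nonneg (by linarith), abs_of_nonneg (by linarith)]
            linarith
        have htA : ∀ x, π true x ≤ tau x := by
          intro x
          rw [htauapp]
          rcases lt_trichotomy (yv x) 0 with h | h | h
          · rw [if_neg (by linarith), hNAv x h]
          · exact absurd h (hnz x)
          · rw [if_pos h]; exact (hadm true x).2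
        have htB : ∀ x, tau x ≤ π false x := by
          intro x
          rw [htauapp]
          rcases lt_trichotomy (yv x) 0 with h | h | h
          · rw [if_neg (by linarith)]; exact (hadm false x).1
          · exact absurd h (hnz x)
          · rw [if_pos h, hPBv x h]
        have hle : ∀ x, π true x ≤ π false x := fun x => le_trans (htA x) (htB x)
        have c1 := hub1 rA (π true) hposA htA
        have c2 := htau_sum rA
        have c3 := hcompare hle
        have c4 := htau_sum rB
        have c5 := hub2 rB (π false) hposB htB
        linarith
    -- Step 2: the policy is the threshold policy
    have hPA : ∀ i, 0 < yv i → π true i = 1 := by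
      intro i hyi
      by_contra hne
      have hpi : π true i < 1 := lt_of_le_of_ne (hadm true i).2 hne
      have hNA : ∀ j, yv j < 0 → π true j = 0 := by
        intro j hyj
        by_contra hne0
        have hpj : 0 < π true j := lt_of_le_of_ne (hadm true j).1 (Ne.symm hne0)
        have hij : j ≠ i := by intro h; rw [h] at hyj; linarith
        have hεpos : 0 < min (1 - π true i) (π true j * rA j / rA i) :=
          lt_min (by linarith) (div_pos (mul_pos hpj (hposA j)) (hposA i))
        set ε := min (1 - π true i) (π true j * rA j / rA i) with hεdef
        have hc : rA j * (ε * rA i / rA j) = ε * rA i := by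
          rw [mul_comm]; exact div_mul_cancel₀ _ (hposA j).ne'
        apply pert_sameA yv wA wB rA rB g lam π hopt hadm hgm hlam i j hij ε (-(ε * rA i / rA j))
        · constructor
          · linarith [(hadm true i).1, hεpos]
          · have := min_le_left (1 - π true i) (π true j * rA j / rA i); linarith
        · constructor
          · have h2 : ε ≤ π true j * rA j / rA i := min_le_right _ _
            rw [le_div_iff₀ (hposA i)] at h2
            have h3 : ε * rA i / rA j ≤ π true j := by
              rw [div_le_iff₀ (hposA j)]
              linarith
            linarith
          · have h4 : 0 ≤ ε * rA i / rA j :=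
              le_of_lt (div_pos (mul_pos hεpos (hposA i)) (hposA j))
            linarith [(hadm true j).2]
        · have hexp : rA i * yv i * ε + rA j * yv j * (-(ε * rA i / rA j))
              = rA i * ε * (yv i - yv j) := by
            linear_combination (-(yv j)) * hc
          rw [hexp]
          exact mul_pos hwA (mul_pos (mul_pos (hposA i) hεpos) (by linarith))
        · linear_combination -hc
      have hPB : ∀ j, 0 < yv j → π false j = 1 := by
        intro j hyj
        by_contra hne1
        have hpj : π false j < 1 := lt_of_le_of_ne (hadm false j).2 hne1
        have hεpos : 0 < min (1 - π true i) ((1 - π false j) * rB j / rA i) :=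
          lt_min (by linarith) (div_pos (mul_pos (by linarith) (hposB j)) (hposA i))
        set ε := min (1 - π true i) ((1 - π false j) * rB j / rA i) with hεdef
        have hc : rB j * (ε * rA i / rB j) = ε * rA i := by
          rw [mul_comm]; exact div_mul_cancel₀ _ (hposB j).ne'
        apply pert_cross yv wA wB rA rB g lam π hopt hadm hgm hlam i j ε (ε * rA i / rB j)
        · constructor
          · linarith [(hadm true i).1, hεpos]
          · have := min_le_left (1 - π true i) ((1 - π false j) * rB j / rA i); linarith
        · constructor
          · have h4 : 0 ≤ ε * rA i / rB j :=
              le_of_lt (div_pos (mul_pos hεpos (hposA i)) (hposB j))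
            linarith [(hadm false j).1]
          · have h2 : ε ≤ (1 - π false j) * rB j / rA i := min_le_right _ _
            rw [le_div_iff₀ (hposA i)] at h2
            have h3 : ε * rA i / rB j ≤ 1 - π false j := by
              rw [div_le_iff₀ (hposB j)]
              linarith
            linarith
        · apply add_pos
          · exact mul_pos hwA (mul_pos (mul_pos (hposA i) hyi) hεpos)
          · exact mul_pos hwB (mul_pos (mul_pos (hposB j) hyj)
              (div_pos (mul_pos hεpos (hposA i)) (hposB j)))
        · have he : (∑ x, rA x * π true x) + rA i * ε
              - ((∑ x, rB x * π false x) + rB j * (ε * rA i / rB j))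
              = (∑ x, rA x * π true x) - ∑ x, rB x * π false x := by
            linear_combination -hc
          rw [he]
      have htA : ∀ x, π true x ≤ tau x := by
        intro x
        rw [htauapp]
        rcases lt_trichotomy (yv x) 0 with h | h | h
        · rw [if_neg (by linarith), hNA x h]
        · exact absurd h (hnz x)
        · rw [if_pos h]; exact (hadm true x).2
      have htB : ∀ x, tau x ≤ π false x := by
        intro x
        rw [htauapp]
        rcases lt_trichotomy (yv x) 0 with h | h | h
        · rw [if_neg (by linarith)]; exact (hadm false x).1
        · exact absurd h (hnz x)
        · rw [if_pos h, hPB x h]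
      have hle : ∀ x, π true x ≤ π false x := fun x => le_trans (htA x) (htB x)
      have hstrict : ∑ x, rA x * π true x < ∑ x, rA x * tau x := by
        apply Finset.sum_lt_sum
          (fun x _ => mul_le_mul_of_nonneg_left (htA x) (hposA x).le)
        refine ⟨i, Finset.mem_univ i, ?_⟩
        have h1 : tau i = 1 := by rw [htauapp, if_pos hyi]
        rw [h1]
        have := hposA i
        nlinarith
      have c2 := htau_sum rA
      have c3 := hcompare hle
      have c4 := htau_sum rB
      have c5 := hub2 rB (π false) hposB htB
      linarith
    have hNB : ∀ i, yv i < 0 → π false i = 0 := by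
      intro i hyi
      by_contra hne
      have hpi : 0 < π false i := lt_of_le_of_ne (hadm false i).1 (Ne.symm hne)
      have hPB' : ∀ j, 0 < yv j → π false j = 1 := by
        intro j hyj
        by_contra hne0
        have hpj : π false j < 1 := lt_of_le_of_ne (hadm false j).2 hne0
        have hij : i ≠ j := by intro h; rw [h] at hyi; linarith
        have hεpos : 0 < min (1 - π false j) (π false i * rB i / rB j) :=
          lt_min (by linarith) (div_pos (mul_pos hpi (hposB i)) (hposB j))
        set ε := min (1 - π false j) (π false i * rB i / rB j) with hεdef
        have hc : rB i * (ε * rB j / rB i) = ε * rB j := by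
          rw [mul_comm]; exact div_mul_cancel₀ _ (hposB i).ne'
        apply pert_sameB yv wA wB rA rB g lam π hopt hadm hgm hlam j i hij ε (-(ε * rB j / rB i))
        · constructor
          · linarith [(hadm false j).1, hεpos]
          · have := min_le_left (1 - π false j) (π false i * rB i / rB j); linarith
        · constructor
          · have h2 : ε ≤ π false i * rB i / rB j := min_le_right _ _
            rw [le_div_iff₀ (hposB j)] at h2
            have h3 : ε * rB j / rB i ≤ π false i := by
              rw [div_le_iff₀ (hposB i)]
              linarith
            linarith
          · have h4 : 0 ≤ ε * rB j / rB i :=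
              le_of_lt (div_pos (mul_pos hεpos (hposB j)) (hposB i))
            linarith [(hadm false i).2]
        · have hexp : rB j * yv j * ε + rB i * yv i * (-(ε * rB j / rB i))
              = rB j * ε * (yv j - yv i) := by
            linear_combination (-(yv i)) * hc
          rw [hexp]
          exact mul_pos hwB (mul_pos (mul_pos (hposB j) hεpos) (by linarith))
        · linear_combination -hc
      have hNA' : ∀ j, yv j < 0 → π true j = 0 := by
        intro j hyj
        by_contra hne0
        have hpj : 0 < π true j := lt_of_le_of_ne (hadm true j).1 (Ne.symm hne0)
        have hεpos : 0 < min (π true j) (π false i * rB i / rA j) :=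
          lt_min hpj (div_pos (mul_pos hpi (hposB i)) (hposA j))
        set ε := min (π true j) (π false i * rB i / rA j) with hεdef
        have hc : rB i * (ε * rA j / rB i) = ε * rA j := by
          rw [mul_comm]; exact div_mul_cancel₀ _ (hposB i).ne'
        apply pert_cross yv wA wB rA rB g lam π hopt hadm hgm hlam j i (-ε) (-(ε * rA j / rB i))
        · constructor
          · have := min_le_left (π true j) (π false i * rB i / rA j); linarith
          · have := (hadm true j).2; linarith
        · constructor
          · have h2 : ε ≤ π false i * rB i / rA j := min_le_right _ _
            rw [le_div_iff₀ (hposA j)] at h2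
            have h3 : ε * rA j / rB i ≤ π false i := by
              rw [div_le_iff₀ (hposB i)]
              linarith
            linarith
          · have h4 : 0 ≤ ε * rA j / rB i :=
              le_of_lt (div_pos (mul_pos hεpos (hposA j)) (hposB i))
            linarith [(hadm false i).2]
        · apply add_pos
          · have hexp : wA * (rA j * yv j * (-ε)) = wA * (rA j * ε) * (-yv j) := by ring
            rw [hexp]
            exact mul_pos (mul_pos hwA (mul_pos (hposA j) hεpos)) (by linarith)
          · have hexp : wB * (rB i * yv i * (-(ε * rA j / rB i)))
                = wB * (rB i * (ε * rA j / rB i)) * (-yv i) := by ring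
            rw [hexp]
            exact mul_pos (mul_pos hwB (mul_pos (hposB i)
              (div_pos (mul_pos hεpos (hposA j)) (hposB i)))) (by linarith)
        · have he : (∑ x, rA x * π true x) + rA j * (-ε)
              - ((∑ x, rB x * π false x) + rB i * (-(ε * rA j / rB i)))
              = (∑ x, rA x * π true x) - ∑ x, rB x * π false x := by
            linear_combination hc
          rw [he]
      have htA : ∀ x, π true x ≤ tau x := by
        intro x
        rw [htauapp]
        rcases lt_trichotomy (yv x) 0 with h | h | h
        · rw [if_neg (by linarith), hNA' x h]
        · exact absurd h (hnz x)
        · rw [if_pos h]; exact (hadm true x).2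
      have htB : ∀ x, tau x ≤ π false x := by
        intro x
        rw [htauapp]
        rcases lt_trichotomy (yv x) 0 with h | h | h
        · rw [if_neg (by linarith)]; exact (hadm false x).1
        · exact absurd h (hnz x)
        · rw [if_pos h, hPB' x h]
      have hle : ∀ x, π true x ≤ π false x := fun x => le_trans (htA x) (htB x)
      have hstrict : ∑ x, rB x * tau x < ∑ x, rB x * π false x := by
        apply Finset.sum_lt_sum
          (fun x _ => mul_le_mul_of_nonneg_left (htB x) (hposB x).le)
        refine ⟨i, Finset.mem_univ i, ?_⟩
        have h1 : tau i = 0 := by rw [htauapp, if_neg (by linarith)]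
        rw [h1]
        have := hposB i
        nlinarith
      have c1 := hub1 rA (π true) hposA htA
      have c2 := htau_sum rA
      have c3 := hcompare hle
      have c4 := htau_sum rB
      linarith
    have hPB : ∀ i, 0 < yv i → π false i = 1 := by
      intro i hyi
      by_contra hne
      have hpi : π false i < 1 := lt_of_le_of_ne (hadm false i).2 hne
      have htB : ∀ x, π false x ≤ tau x := by
        intro x
        rw [htauapp]
        rcases lt_trichotomy (yv x) 0 with h | h | h
        · rw [if_neg (by linarith), hNB x h]
        · exact absurd h (hnz x)
        · rw [if_pos h]; exact (hadm false x).2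
      have htA : ∀ x, tau x ≤ π true x := by
        intro x
        rw [htauapp]
        rcases lt_trichotomy (yv x) 0 with h | h | h
        · rw [if_neg (by linarith)]; exact (hadm true x).1
        · exact absurd h (hnz x)
        · rw [if_pos h, hPA x h]
      have hle : ∀ x, π false x ≤ π true x := fun x => le_trans (htB x) (htA x)
      have hstrict : ∑ x, rB x * π false x < ∑ x, rB x * tau x := by
        apply Finset.sum_lt_sum
          (fun x _ => mul_le_mul_of_nonneg_left (htB x) (hposB x).le)
        refine ⟨i, Finset.mem_univ i, ?_⟩
        have h1 : tau i = 1 := by rw [htauapp, if_pos hyi]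
        rw [h1]
        have := hposB i
        nlinarith
      have c2 := htau_sum rB
      have c3 := hcompare' hle
      have c4 := htau_sum rA
      have c5 := hub2 rA (π true) hposA htA
      linarith
    have hNA : ∀ i, yv i < 0 → π true i = 0 := by
      intro i hyi
      by_contra hne
      have hpi : 0 < π true i := lt_of_le_of_ne (hadm true i).1 (Ne.symm hne)
      have htB : ∀ x, π false x ≤ tau x := by
        intro x
        rw [htauapp]
        rcases lt_trichotomy (yv x) 0 with h | h | h
        · rw [if_neg (by linarith), hNB x h]
        · exact absurd h (hnz x)
        · rw [if_pos h]; exact (hadm false x).2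
      have htA : ∀ x, tau x ≤ π true x := by
        intro x
        rw [htauapp]
        rcases lt_trichotomy (yv x) 0 with h | h | h
        · rw [if_neg (by linarith)]; exact (hadm true x).1
        · exact absurd h (hnz x)
        · rw [if_pos h, hPA x h]
      have hle : ∀ x, π false x ≤ π true x := fun x => le_trans (htB x) (htA x)
      have hstrict : ∑ x, rA x * tau x < ∑ x, rA x * π true x := by
        apply Finset.sum_lt_sum
          (fun x _ => mul_le_mul_of_nonneg_left (htA x) (hposA x).le)
        refine ⟨i, Finset.mem_univ i, ?_⟩
        have h1 : tau i = 0 := by rw [htauapp, if_neg (by linarith)]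
        rw [h1]
        have := hposA i
        nlinarith
      have c1 := hub1 rB (π false) hposB htB
      have c2 := htau_sum rB
      have c3 := hcompare' hle
      have c4 := htau_sum rA
      linarith
    -- conclude: both distributions are stationary for T
    have hTA : ∀ j, ∑ i, rA i * T j i = rA j := by
      intro j
      rw [← hstA j]
      apply Finset.sum_congr rfl
      intro x _
      congr 1
      rw [hTapp]
      unfold polK
      rcases lt_trichotomy (yv x) 0 with h | h | h
      · rw [if_neg (by linarith), hNA x h]; ring
      · exact absurd h (hnz x)
      · rw [if_pos h, hPA x h]; ring
    have hTB : ∀ j, ∑ i, rB i * T j i = rB j := by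
      intro j
      rw [← hstB j]
      apply Finset.sum_congr rfl
      intro x _
      congr 1
      rw [hTapp]
      unfold polK
      rcases lt_trichotomy (yv x) 0 with h | h | h
      · rw [if_neg (by linarith), hNB x h]; ring
      · exact absurd h (hnz x)
      · rw [if_pos h, hPB x h]; ring
    exact ⟨huniq rA hdA hTA, huniq rB hdB hTB⟩
end
end

section
/- (Stochastic dominance for birth–death chains.) Let P and Q be n × n stochastic matrices on states {1, …, n} with birth–death support: P_{i,j} > 0 if and only if |i − j| ≤ 1, and likewise for Q. Assume P_{k,k+1} ≥ Q_{k,k+1} and P_{k+1,k} ≤ Q_{k+1,k} for every 1 ≤ k ≤ n − 1. Then the (unique) stationary distributions π_P of P and π_Q of Q satisfy, for every s ∈ {1, …, n}, ∑_{i ≥ s} π_P(i) ≥ ∑_{i ≥ s} π_Q(i) (equivalently ∑_{i ≤ s} π_P(i) ≤ ∑_{i ≤ s} π_Q(i)); i.e., π_P stochastically dominates π_Q. -/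
/-!
Stochastic dominance for birth–death chains: `P` and `Q` are stochastic matrices on
`Fin n` whose support is exactly the band `|i − j| ≤ 1`.
-/

open Finset

/-- `π₀` is a stationary distribution of the row-stochastic matrix `P`. -/
def IsStationaryDistrib {n : ℕ} (P : Fin n → Fin n → ℝ) (π₀ : Fin n → ℝ) : Prop :=
  (∀ i, 0 ≤ π₀ i) ∧ (∑ i, π₀ i) = 1 ∧ ∀ j, (∑ i, π₀ i * P i j) = π₀ j

lemma sum_two' {n : ℕ} (F : Fin n → ℝ) (a b : Fin n) (hab : a ≠ b)
    (hz : ∀ i, i ≠ a → i ≠ b → F i = 0) :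
    ∑ i, F i = F a + F b := by
  rw [← Finset.sum_subset (Finset.subset_univ ({a, b} : Finset (Fin n)))
      (fun x _ hx => by
        simp only [Finset.mem_insert, Finset.mem_singleton, not_or] at hx
        exact hz x hx.1 hx.2)]
  simp [Finset.sum_insert, hab]

lemma sum_three' {n : ℕ} (F : Fin n → ℝ) (a b c : Fin n)
    (hab : a ≠ b) (hac : a ≠ c) (hbc : b ≠ c)
    (hz : ∀ i, i ≠ a → i ≠ b → i ≠ c → F i = 0) :
    ∑ i, F i = F a + F b + F c := by
  rw [← Finset.sum_subset (Finset.subset_univ ({a, b, c} : Finset (Fin n)))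
      (fun x _ hx => by
        simp only [Finset.mem_insert, Finset.mem_singleton, not_or] at hx
        exact hz x hx.1 hx.2.1 hx.2.2)]
  rw [Finset.sum_insert (by simp [hab, hac]), Finset.sum_insert (by simp [hbc]),
    Finset.sum_singleton, add_assoc]

lemma band_zero {n : ℕ} (P : Fin n → Fin n → ℝ) (hP0 : ∀ i j, 0 ≤ P i j)
    (hPband : ∀ i j, 0 < P i j ↔ |(i : ℤ) - (j : ℤ)| ≤ 1) :
    ∀ i j : Fin n, ((i : ℕ) + 1 < (j : ℕ) ∨ (j : ℕ) + 1 < (i : ℕ)) → P i j = 0 := by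
  intro i j h
  by_contra hne
  have hb := (hPband i j).1 (lt_of_le_of_ne (hP0 i j) (Ne.symm hne))
  rw [abs_le] at hb
  omega

lemma detailed_balance {n : ℕ} (P : Fin n → Fin n → ℝ)
    (hP0 : ∀ i j, 0 ≤ P i j) (hP1 : ∀ i, (∑ j, P i j) = 1)
    (hPband : ∀ i j, 0 < P i j ↔ |(i : ℤ) - (j : ℤ)| ≤ 1)
    (π : Fin n → ℝ) (hπ : IsStationaryDistrib P π) :
    ∀ k : ℕ, ∀ hk : k + 1 < n,
      π ⟨k, by omega⟩ * P ⟨k, by omega⟩ ⟨k+1, hk⟩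
        = π ⟨k+1, hk⟩ * P ⟨k+1, hk⟩ ⟨k, by omega⟩ := by
  have hz := band_zero P hP0 hPband
  intro k
  induction k with
  | zero =>
    intro hk
    have h0 : 0 < n := by omega
    have hstat : π ⟨0,h0⟩ * P ⟨0,h0⟩ ⟨0,h0⟩ + π ⟨1,hk⟩ * P ⟨1,hk⟩ ⟨0,h0⟩ = π ⟨0,h0⟩ := by
      refine Eq.trans ?_ (hπ.2.2 ⟨0,h0⟩)
      exact (sum_two' (fun i => π i * P i ⟨0,h0⟩) ⟨0,h0⟩ ⟨1,hk⟩ (by simp [Fin.ext_iff])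
        (fun i hia hib => by
          have h1 : (i:ℕ) ≠ 0 := fun h => hia (Fin.ext h)
          have h2 : (i:ℕ) ≠ 1 := fun h => hib (Fin.ext h)
          have : P i ⟨0,h0⟩ = 0 := hz i ⟨0,h0⟩ (Or.inr (show 0 + 1 < (i:ℕ) by omega))
          simp only [this, mul_zero])).symm
    have hrow : P ⟨0,h0⟩ ⟨0,h0⟩ + P ⟨0,h0⟩ ⟨1,hk⟩ = 1 := by
      rw [← hP1 ⟨0,h0⟩]
      exact (sum_two' (fun j => P ⟨0,h0⟩ j) ⟨0,h0⟩ ⟨1,hk⟩ (by simp [Fin.ext_iff])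
        (fun j hja hjb => by
          have h1 : (j:ℕ) ≠ 0 := fun h => hja (Fin.ext h)
          have h2 : (j:ℕ) ≠ 1 := fun h => hjb (Fin.ext h)
          exact hz ⟨0,h0⟩ j (Or.inl (show 0 + 1 < (j:ℕ) by omega)))).symm
    linear_combination π ⟨0,h0⟩ * hrow - hstat
  | succ k ih =>
    intro hk
    have hk' : k + 1 < n := by omega
    have hkn : k < n := by omega
    have hk2 : k + 2 < n := by omega
    have ihk := ih hk'
    have hstat : π ⟨k,hkn⟩ * P ⟨k,hkn⟩ ⟨k+1,hk'⟩ + π ⟨k+1,hk'⟩ * P ⟨k+1,hk'⟩ ⟨k+1,hk'⟩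
        + π ⟨k+2,hk2⟩ * P ⟨k+2,hk2⟩ ⟨k+1,hk'⟩ = π ⟨k+1,hk'⟩ := by
      refine Eq.trans ?_ (hπ.2.2 ⟨k+1,hk'⟩)
      exact (sum_three' (fun i => π i * P i ⟨k+1,hk'⟩) ⟨k,hkn⟩ ⟨k+1,hk'⟩ ⟨k+2,hk2⟩
        (by simp [Fin.ext_iff]) (by simp [Fin.ext_iff]) (by simp [Fin.ext_iff])
        (fun i hia hib hic => by
          have h1 : (i:ℕ) ≠ k := fun h => hia (Fin.ext h)
          have h2 : (i:ℕ) ≠ k+1 := fun h => hib (Fin.ext h)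
          have h3 : (i:ℕ) ≠ k+2 := fun h => hic (Fin.ext h)
          have : P i ⟨k+1,hk'⟩ = 0 := hz i ⟨k+1,hk'⟩
            (show (i:ℕ) + 1 < k+1 ∨ (k+1) + 1 < (i:ℕ) by omega)
          simp only [this, mul_zero])).symm
    have hrow : P ⟨k+1,hk'⟩ ⟨k,hkn⟩ + P ⟨k+1,hk'⟩ ⟨k+1,hk'⟩ + P ⟨k+1,hk'⟩ ⟨k+2,hk2⟩ = 1 := by
      rw [← hP1 ⟨k+1,hk'⟩]
      exact (sum_three' (fun j => P ⟨k+1,hk'⟩ j) ⟨k,hkn⟩ ⟨k+1,hk'⟩ ⟨k+2,hk2⟩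
        (by simp [Fin.ext_iff]) (by simp [Fin.ext_iff]) (by simp [Fin.ext_iff])
        (fun j hja hjb hjc => by
          have h1 : (j:ℕ) ≠ k := fun h => hja (Fin.ext h)
          have h2 : (j:ℕ) ≠ k+1 := fun h => hjb (Fin.ext h)
          have h3 : (j:ℕ) ≠ k+2 := fun h => hjc (Fin.ext h)
          exact hz ⟨k+1,hk'⟩ j
            (show (k+1) + 1 < (j:ℕ) ∨ (j:ℕ) + 1 < k+1 by omega))).symm
    linear_combination π ⟨k+1,hk'⟩ * hrow - hstat + ihk

lemma pos_of_stationary {n : ℕ} (P : Fin n → Fin n → ℝ)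
    (hP0 : ∀ i j, 0 ≤ P i j) (hP1 : ∀ i, (∑ j, P i j) = 1)
    (hPband : ∀ i j, 0 < P i j ↔ |(i : ℤ) - (j : ℤ)| ≤ 1)
    (π : Fin n → ℝ) (hπ : IsStationaryDistrib P π) :
    ∀ k : Fin n, 0 < π k := by
  have hdb := detailed_balance P hP0 hP1 hPband π hπ
  -- transfer of positivity across a step
  have hstep : ∀ k : ℕ, ∀ hk : k + 1 < n,
      (0 < π ⟨k, by omega⟩ ↔ 0 < π ⟨k+1, hk⟩) := by
    intro k hk
    have hp : 0 < P ⟨k, by omega⟩ ⟨k+1, hk⟩ := (hPband _ _).2 (by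
      rw [abs_le]; constructor <;> (push_cast; omega))
    have hq : 0 < P ⟨k+1, hk⟩ ⟨k, by omega⟩ := (hPband _ _).2 (by
      rw [abs_le]; constructor <;> push_cast <;> omega)
    have heq := hdb k hk
    have h1 := hπ.1 ⟨k, by omega⟩
    have h2 := hπ.1 ⟨k+1, hk⟩
    constructor
    · intro h
      nlinarith
    · intro h
      nlinarith
  have hiff : ∀ k : ℕ, ∀ hk : k < n, (0 < π ⟨0, by omega⟩ ↔ 0 < π ⟨k, hk⟩) := by
    intro k
    induction k with
    | zero => intro hk; rfl
    | succ k ih => intro hk; exact (ih (by omega)).trans (hstep k hk)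
  have hex : ∃ k : Fin n, 0 < π k := by
    by_contra hno
    push_neg at hno
    have hall : ∀ k : Fin n, π k = 0 := fun k => le_antisymm (hno k) (hπ.1 k)
    have : (∑ i, π i) = 0 := by simp [hall]
    rw [hπ.2.1] at this; norm_num at this
  obtain ⟨k, hkpos⟩ := hex
  have h0 := (hiff k.val k.isLt).2 (by simpa using hkpos)
  intro m
  have := (hiff m.val m.isLt).1 h0
  simpa using this

/-- Likelihood-ratio step. -/
lemma mlr_step {n : ℕ} (P Q : Fin n → Fin n → ℝ)
    (hP0 : ∀ i j, 0 ≤ P i j) (hP1 : ∀ i, (∑ j, P i j) = 1)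
    (hQ0 : ∀ i j, 0 ≤ Q i j) (hQ1 : ∀ i, (∑ j, Q i j) = 1)
    (hPband : ∀ i j, 0 < P i j ↔ |(i : ℤ) - (j : ℤ)| ≤ 1)
    (hQband : ∀ i j, 0 < Q i j ↔ |(i : ℤ) - (j : ℤ)| ≤ 1)
    (hcomp : ∀ i j : Fin n, (j : ℕ) = (i : ℕ) + 1 → Q i j ≤ P i j ∧ P j i ≤ Q j i)
    (πP πQ : Fin n → ℝ) (hπP : IsStationaryDistrib P πP) (hπQ : IsStationaryDistrib Q πQ) :
    ∀ k : ℕ, ∀ hk : k + 1 < n,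
      πQ ⟨k+1, hk⟩ * πP ⟨k, by omega⟩ ≤ πP ⟨k+1, hk⟩ * πQ ⟨k, by omega⟩ := by
  intro k hk
  have hdbP := detailed_balance P hP0 hP1 hPband πP hπP k hk
  have hdbQ := detailed_balance Q hQ0 hQ1 hQband πQ hπQ k hk
  have hcm := hcomp ⟨k, by omega⟩ ⟨k+1, hk⟩ rfl
  have hpP := pos_of_stationary P hP0 hP1 hPband πP hπP
  have hpQ := pos_of_stationary Q hQ0 hQ1 hQband πQ hπQ
  have hp : 0 < P ⟨k+1, hk⟩ ⟨k, by omega⟩ := (hPband _ _).2 (by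
    rw [abs_le]; constructor <;> push_cast <;> omega)
  have hq : 0 < Q ⟨k+1, hk⟩ ⟨k, by omega⟩ := (hQband _ _).2 (by
    rw [abs_le]; constructor <;> push_cast <;> omega)
  have hpk := hpP ⟨k, by omega⟩
  have hqk := hpQ ⟨k, by omega⟩
  have hq2 : 0 ≤ Q ⟨k, by omega⟩ ⟨k+1, hk⟩ := hQ0 _ _
  -- goal times (P⟨k+1⟩⟨k⟩ * Q⟨k+1⟩⟨k⟩) follows from balance eqs and comparisons
  rw [← mul_le_mul_iff_of_pos_right (mul_pos hp hq)]
  calc πQ ⟨k+1, hk⟩ * πP ⟨k, by omega⟩ * (P ⟨k+1, hk⟩ ⟨k, by omega⟩ * Q ⟨k+1, hk⟩ ⟨k, by omega⟩)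
      = (πQ ⟨k, by omega⟩ * Q ⟨k, by omega⟩ ⟨k+1, hk⟩) * (πP ⟨k, by omega⟩ * P ⟨k+1, hk⟩ ⟨k, by omega⟩) := by
        linear_combination (-(πP ⟨k, by omega⟩ * P ⟨k+1, hk⟩ ⟨k, by omega⟩)) * hdbQ
    _ ≤ (πQ ⟨k, by omega⟩ * Q ⟨k+1, hk⟩ ⟨k, by omega⟩) * (πP ⟨k, by omega⟩ * P ⟨k, by omega⟩ ⟨k+1, hk⟩) := by
        have h1 : Q ⟨k, by omega⟩ ⟨k+1, hk⟩ * P ⟨k+1, hk⟩ ⟨k, by omega⟩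
            ≤ Q ⟨k+1, hk⟩ ⟨k, by omega⟩ * P ⟨k, by omega⟩ ⟨k+1, hk⟩ := by
          calc Q ⟨k, by omega⟩ ⟨k+1, hk⟩ * P ⟨k+1, hk⟩ ⟨k, by omega⟩
              ≤ P ⟨k, by omega⟩ ⟨k+1, hk⟩ * Q ⟨k+1, hk⟩ ⟨k, by omega⟩ :=
                mul_le_mul hcm.1 hcm.2 (le_of_lt hp) (hP0 _ _)
            _ = Q ⟨k+1, hk⟩ ⟨k, by omega⟩ * P ⟨k, by omega⟩ ⟨k+1, hk⟩ := mul_comm _ _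
        nlinarith [mul_pos hpk hqk]
    _ = πP ⟨k+1, hk⟩ * πQ ⟨k, by omega⟩ * (P ⟨k+1, hk⟩ ⟨k, by omega⟩ * Q ⟨k+1, hk⟩ ⟨k, by omega⟩) := by
        linear_combination (πQ ⟨k, by omega⟩ * Q ⟨k+1, hk⟩ ⟨k, by omega⟩) * hdbP

lemma mlr_global {n : ℕ} (P Q : Fin n → Fin n → ℝ)
    (hP0 : ∀ i j, 0 ≤ P i j) (hP1 : ∀ i, (∑ j, P i j) = 1)
    (hQ0 : ∀ i j, 0 ≤ Q i j) (hQ1 : ∀ i, (∑ j, Q i j) = 1)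
    (hPband : ∀ i j, 0 < P i j ↔ |(i : ℤ) - (j : ℤ)| ≤ 1)
    (hQband : ∀ i j, 0 < Q i j ↔ |(i : ℤ) - (j : ℤ)| ≤ 1)
    (hcomp : ∀ i j : Fin n, (j : ℕ) = (i : ℕ) + 1 → Q i j ≤ P i j ∧ P j i ≤ Q j i)
    (πP πQ : Fin n → ℝ) (hπP : IsStationaryDistrib P πP) (hπQ : IsStationaryDistrib Q πQ) :
    ∀ i j : Fin n, i ≤ j → πQ j * πP i ≤ πP j * πQ i := by
  have hstep := mlr_step P Q hP0 hP1 hQ0 hQ1 hPband hQband hcomp πP πQ hπP hπQ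
  have hpP := pos_of_stationary P hP0 hP1 hPband πP hπP
  have hpQ := pos_of_stationary Q hQ0 hQ1 hQband πQ hπQ
  have H : ∀ d i : ℕ, ∀ h : i + d < n,
      πQ ⟨i+d, h⟩ * πP ⟨i, by omega⟩ ≤ πP ⟨i+d, h⟩ * πQ ⟨i, by omega⟩ := by
    intro d
    induction d with
    | zero => intro i h; exact le_of_eq (mul_comm _ _)
    | succ d ih =>
      intro i h
      have h' : i + d < n := by omega
      have ihd := ih i h'
      have hst := hstep (i + d) (show (i+d)+1 < n by omega)
      have p1 := hpP ⟨i+d, h'⟩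
      have p2 := hpQ ⟨i+d, h'⟩
      have p3 := hpP ⟨i, by omega⟩
      have p4 := hpQ ⟨i, by omega⟩
      have p5 := hpP ⟨i+d+1, by omega⟩
      have p6 := hpQ ⟨i+d+1, by omega⟩
      have key := mul_le_mul hst ihd (by positivity) (by positivity)
      show πQ ⟨i+d+1, by omega⟩ * πP ⟨i, by omega⟩ ≤ πP ⟨i+d+1, by omega⟩ * πQ ⟨i, by omega⟩
      nlinarith [mul_pos p1 p2, key]
  intro i j hij
  have hj : (i : ℕ) + ((j : ℕ) - (i : ℕ)) < n := by
    have := j.isLt; have := Fin.le_def.1 hij; omega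
  have := H ((j : ℕ) - (i : ℕ)) (i : ℕ) hj
  have hjeq : (⟨(i : ℕ) + ((j : ℕ) - (i : ℕ)), hj⟩ : Fin n) = j := by
    apply Fin.ext; simp; have := Fin.le_def.1 hij; omega
  have hieq : (⟨(i : ℕ), by omega⟩ : Fin n) = i := Fin.ext rfl
  rwa [hjeq, hieq] at this


/-- Stochastic dominance for birth–death chains. If `P` and `Q`
are birth–death stochastic matrices with `P_{k,k+1} ≥ Q_{k,k+1}` and
`P_{k+1,k} ≤ Q_{k+1,k}` for all `k`, then the stationary distribution of `P`
stochastically dominates that of `Q`. -/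
theorem stmt_16 (n : ℕ) (hn : 0 < n) (P Q : Fin n → Fin n → ℝ)
    (hP0 : ∀ i j, 0 ≤ P i j) (hP1 : ∀ i, (∑ j, P i j) = 1)
    (hQ0 : ∀ i j, 0 ≤ Q i j) (hQ1 : ∀ i, (∑ j, Q i j) = 1)
    (hPband : ∀ i j, 0 < P i j ↔ |(i : ℤ) - (j : ℤ)| ≤ 1)
    (hQband : ∀ i j, 0 < Q i j ↔ |(i : ℤ) - (j : ℤ)| ≤ 1)
    (hcomp : ∀ i j : Fin n, (j : ℕ) = (i : ℕ) + 1 →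
      Q i j ≤ P i j ∧ P j i ≤ Q j i)
    (πP πQ : Fin n → ℝ)
    (hπP : IsStationaryDistrib P πP) (hπQ : IsStationaryDistrib Q πQ) :
    ∀ s : Fin n,
      (∑ i ∈ univ.filter (fun i => s ≤ i), πQ i) ≤
        (∑ i ∈ univ.filter (fun i => s ≤ i), πP i) ∧
      (∑ i ∈ univ.filter (fun i => i ≤ s), πP i) ≤
        (∑ i ∈ univ.filter (fun i => i ≤ s), πQ i) := by
  have hmlr := mlr_global P Q hP0 hP1 hQ0 hQ1 hPband hQband hcomp πP πQ hπP hπQ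
  have hPnn := hπP.1
  have hQnn := hπQ.1
  intro s
  constructor
  · -- tails
    have key : (∑ i ∈ univ.filter (fun i => s ≤ i), πQ i) *
          (∑ j ∈ univ.filter (fun j => ¬ s ≤ j), πP j)
        ≤ (∑ i ∈ univ.filter (fun i => s ≤ i), πP i) *
          (∑ j ∈ univ.filter (fun j => ¬ s ≤ j), πQ j) := by
      rw [Finset.sum_mul_sum, Finset.sum_mul_sum]
      refine Finset.sum_le_sum fun i hi => Finset.sum_le_sum fun j hj => ?_
      simp only [Finset.mem_filter] at hi hj
      exact hmlr j i (le_trans (le_of_lt (lt_of_not_ge hj.2)) hi.2)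
    have hsplitP : (∑ i ∈ univ.filter (fun i => s ≤ i), πP i) +
        (∑ i ∈ univ.filter (fun i => ¬ s ≤ i), πP i) = 1 := by
      rw [Finset.sum_filter_add_sum_filter_not]; exact hπP.2.1
    have hsplitQ : (∑ i ∈ univ.filter (fun i => s ≤ i), πQ i) +
        (∑ i ∈ univ.filter (fun i => ¬ s ≤ i), πQ i) = 1 := by
      rw [Finset.sum_filter_add_sum_filter_not]; exact hπQ.2.1
    have e1 : (∑ i ∈ univ.filter (fun i => ¬ s ≤ i), πP i)
        = 1 - (∑ i ∈ univ.filter (fun i => s ≤ i), πP i) := by linarith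
    have e2 : (∑ i ∈ univ.filter (fun i => ¬ s ≤ i), πQ i)
        = 1 - (∑ i ∈ univ.filter (fun i => s ≤ i), πQ i) := by linarith
    rw [e1, e2] at key
    nlinarith [key]
  · -- heads
    have key : (∑ i ∈ univ.filter (fun i => i ≤ s), πP i) *
          (∑ j ∈ univ.filter (fun j => ¬ j ≤ s), πQ j)
        ≤ (∑ i ∈ univ.filter (fun i => i ≤ s), πQ i) *
          (∑ j ∈ univ.filter (fun j => ¬ j ≤ s), πP j) := by
      rw [Finset.sum_mul_sum, Finset.sum_mul_sum]
      refine Finset.sum_le_sum fun i hi => Finset.sum_le_sum fun j hj => ?_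
      simp only [Finset.mem_filter] at hi hj
      have hij : i ≤ j := le_trans hi.2 (le_of_lt (lt_of_not_ge hj.2))
      rw [mul_comm (πP i), mul_comm (πQ i)]
      exact hmlr i j hij
    have hsplitP : (∑ i ∈ univ.filter (fun i => i ≤ s), πP i) +
        (∑ i ∈ univ.filter (fun i => ¬ i ≤ s), πP i) = 1 := by
      rw [Finset.sum_filter_add_sum_filter_not]; exact hπP.2.1
    have hsplitQ : (∑ i ∈ univ.filter (fun i => i ≤ s), πQ i) +
        (∑ i ∈ univ.filter (fun i => ¬ i ≤ s), πQ i) = 1 := by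
      rw [Finset.sum_filter_add_sum_filter_not]; exact hπQ.2.1
    have e1 : (∑ i ∈ univ.filter (fun i => ¬ i ≤ s), πP i)
        = 1 - (∑ i ∈ univ.filter (fun i => i ≤ s), πP i) := by linarith
    have e2 : (∑ i ∈ univ.filter (fun i => ¬ i ≤ s), πQ i)
        = 1 - (∑ i ∈ univ.filter (fun i => i ≤ s), πQ i) := by linarith
    rw [e1, e2] at key
    nlinarith [key]
end
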